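/- arXiv:1408.5176 — 6 statements merged into one kernel-verified Lean document; each statement's English description precedes it below -/
import Mathlib

section
/- For every finite simple graph G and every nonempty proper subset S of V(G), one has α₁(G) + τ(G) ≤ (α₁(G[S]) + τ(G[S])) + (α₁(G[S̄]) + τ(G[S̄])) + |[S, S̄]|, where G[S] and G[S̄] are the induced subgraphs on S and its complement S̄. -/
open Finset

/-- `A` is a triangle-independent set of edges of `G`: it consists of edges of `G`
and contains at most one edge from each triangle of `G`. -/
def TriIndep {V : Type*} (G : SimpleGraph V) (A : Finset (Sym2 V)) : Prop :=
  (A : Set (Sym2 V)) ⊆ G.edgeSet ∧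
    ∀ x y z : V, G.Adj x y → G.Adj y z → G.Adj x z →
      ¬(s(x, y) ∈ A ∧ s(y, z) ∈ A)

/-- `α₁ G`: the maximum size of a triangle-independent set of edges of `G`. -/
noncomputable def alpha1 {V : Type*} [Fintype V] (G : SimpleGraph V) : ℕ :=
  sSup {k | ∃ A : Finset (Sym2 V), TriIndep G A ∧ A.card = k}

/-- `τ G`: the minimum size of a set of edges whose deletion makes `G` triangle-free. -/
noncomputable def tau {V : Type*} [Fintype V] (G : SimpleGraph V) : ℕ :=
  sInf {k | ∃ X : Finset (Sym2 V), (X : Set (Sym2 V)) ⊆ G.edgeSet ∧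
    (G.deleteEdges (X : Set (Sym2 V))).CliqueFree 3 ∧ X.card = k}

/-- `τ_B G`: the minimum size of a set of edges whose deletion makes `G` bipartite. -/
noncomputable def tauB {V : Type*} [Fintype V] (G : SimpleGraph V) : ℕ :=
  sInf {k | ∃ X : Finset (Sym2 V), (X : Set (Sym2 V)) ⊆ G.edgeSet ∧
    (G.deleteEdges (X : Set (Sym2 V))).Colorable 2 ∧ X.card = k}

open scoped Classical in
/-- The edge cut `[S, S̄]`: the set of edges of `G` with one endpoint in `S`
and the other outside `S`. -/
noncomputable def edgeCut {V : Type*} [Fintype V] (G : SimpleGraph V) (S : Finset V) :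
    Finset (Sym2 V) :=
  G.edgeFinset.filter (fun e => ∃ x ∈ S, ∃ y ∉ S, e = s(x, y))

open scoped Classical in
/-- The number of edges of `G`. -/
noncomputable def edgeCount {V : Type*} [Fintype V] (G : SimpleGraph V) : ℕ :=
  G.edgeFinset.card

/-- The independence number of `G`. -/
noncomputable def indepNum {V : Type*} [Fintype V] (G : SimpleGraph V) : ℕ :=
  sSup {k | ∃ I : Finset V, (∀ x ∈ I, ∀ y ∈ I, ¬G.Adj x y) ∧ I.card = k}

/-- `K₄⁻`: the complete graph on 4 vertices with one edge deleted. -/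
def K4minus : SimpleGraph (Fin 4) := (SimpleGraph.completeGraph (Fin 4)).deleteEdges {s(0, 1)}

section Aux
variable {V : Type*} [Fintype V]

private lemma alpha1_bdd (G : SimpleGraph V) :
    BddAbove {k | ∃ A : Finset (Sym2 V), TriIndep G A ∧ A.card = k} := by
  classical
  exact ⟨Fintype.card (Sym2 V), fun k ⟨A, _, hc⟩ => hc ▸ A.card_le_univ⟩

private lemma le_alpha1 {G : SimpleGraph V} {A : Finset (Sym2 V)} (hA : TriIndep G A) :
    A.card ≤ alpha1 G :=
  le_csSup (alpha1_bdd G) ⟨A, hA, rfl⟩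

private lemma exists_alpha1 (G : SimpleGraph V) :
    ∃ A : Finset (Sym2 V), TriIndep G A ∧ A.card = alpha1 G := by
  have h0 : TriIndep G (∅ : Finset (Sym2 V)) :=
    ⟨by simp, fun x y z _ _ _ h => by simp at h⟩
  exact Nat.sSup_mem (s := {k | ∃ A : Finset (Sym2 V), TriIndep G A ∧ A.card = k})
    ⟨0, ∅, h0, by simp⟩ (alpha1_bdd G)

private lemma tau_le {G : SimpleGraph V} {X : Finset (Sym2 V)}
    (h1 : (X : Set (Sym2 V)) ⊆ G.edgeSet)
    (h2 : (G.deleteEdges (X : Set (Sym2 V))).CliqueFree 3) : tau G ≤ X.card :=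
  Nat.sInf_le ⟨X, h1, h2, rfl⟩

private lemma exists_tau (G : SimpleGraph V) :
    ∃ X : Finset (Sym2 V), (X : Set (Sym2 V)) ⊆ G.edgeSet ∧
      (G.deleteEdges (X : Set (Sym2 V))).CliqueFree 3 ∧ X.card = tau G := by
  classical
  apply Nat.sInf_mem (s := {k | ∃ X : Finset (Sym2 V), (X : Set (Sym2 V)) ⊆ G.edgeSet ∧
    (G.deleteEdges (X : Set (Sym2 V))).CliqueFree 3 ∧ X.card = k})
  refine ⟨G.edgeFinset.card, G.edgeFinset, by simp, ?_, rfl⟩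
  rw [SimpleGraph.coe_edgeFinset, SimpleGraph.deleteEdges_edgeSet, sdiff_self]
  exact SimpleGraph.cliqueFree_bot (by norm_num)

end Aux

section Aux2
variable {V : Type*} [Fintype V]

private lemma card_le_alpha1_induce (G : SimpleGraph V) (s : Set V) [Fintype s]
    {A B : Finset (Sym2 V)} (hA : TriIndep G A) (hBA : B ⊆ A)
    (hBs : ∀ e ∈ B, ∀ v ∈ e, v ∈ s) : B.card ≤ alpha1 (G.induce s) := by
  classical
  set f : Sym2 s → Sym2 V := Sym2.map (Subtype.val) with hfdef
  have hfinj : Function.Injective f := Sym2.map.injective Subtype.val_injective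
  set C : Finset (Sym2 s) := B.preimage f hfinj.injOn with hC
  have himg : C.image f = B := by
    ext e
    simp only [hC, Finset.mem_image, Finset.mem_preimage]
    constructor
    · rintro ⟨b, hb, rfl⟩; exact hb
    · intro he
      induction e using Sym2.inductionOn with
      | hf x y =>
        refine ⟨s(⟨x, hBs _ he x (by simp)⟩, ⟨y, hBs _ he y (by simp)⟩), ?_, ?_⟩
        · simpa [hfdef] using he
        · simp [hfdef]
  have hcard : C.card = B.card := by
    rw [← himg, Finset.card_image_of_injective _ hfinj]
  have hTI : TriIndep (G.induce s) C := by
    constructor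
    · intro e he
      induction e using Sym2.inductionOn with
      | hf a b =>
        have h1 : f s(a, b) ∈ B := Finset.mem_preimage.mp (Finset.mem_coe.mp he)
        have h2 : s((a : V), (b : V)) ∈ A := hBA (by simpa [hfdef] using h1)
        have hadj : G.Adj a.val b.val :=
          (SimpleGraph.mem_edgeSet _).mp (hA.1 (Finset.mem_coe.mpr h2))
        exact (SimpleGraph.mem_edgeSet _).mpr (by simpa using hadj)
    · intro x y z hxy hyz hxz hmem
      obtain ⟨h1, h2⟩ := hmem
      have h1' : s((x : V), (y : V)) ∈ A := hBA (by simpa [hfdef] using Finset.mem_preimage.mp h1)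
      have h2' : s((y : V), (z : V)) ∈ A := hBA (by simpa [hfdef] using Finset.mem_preimage.mp h2)
      exact hA.2 x y z (by simpa using hxy) (by simpa using hyz) (by simpa using hxz) ⟨h1', h2'⟩
  calc B.card = C.card := hcard.symm
    _ ≤ alpha1 (G.induce s) := le_alpha1 hTI

private lemma image_subset_edgeSet [DecidableEq V] (G : SimpleGraph V) (s : Set V) [Fintype s]
    {X : Finset (Sym2 s)} (hX : (X : Set (Sym2 s)) ⊆ (G.induce s).edgeSet) :
    ((X.image (Sym2.map (Subtype.val : s → V))) : Set (Sym2 V)) ⊆ G.edgeSet := by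
  classical
  intro e he
  obtain ⟨b, hb, rfl⟩ := Finset.mem_image.mp (Finset.mem_coe.mp he)
  induction b using Sym2.inductionOn with
  | hf u v =>
    have hadj : (G.induce s).Adj u v :=
      (SimpleGraph.mem_edgeSet _).mp (hX (Finset.mem_coe.mpr hb))
    have h2 : G.Adj (u : V) (v : V) := by simpa using hadj
    exact (SimpleGraph.mem_edgeSet _).mpr (by simpa using h2)

private lemma no_inside_triangle [DecidableEq V] (G : SimpleGraph V) (s : Set V) [Fintype s]
    {X : Finset (Sym2 s)} (hX : ((G.induce s).deleteEdges (X : Set (Sym2 s))).CliqueFree 3)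
    {x y z : V} (hx : x ∈ s) (hy : y ∈ s) (hz : z ∈ s)
    (hxy : G.Adj x y) (hyz : G.Adj y z) (hxz : G.Adj x z)
    (nxy : s(x, y) ∉ X.image (Sym2.map (Subtype.val : s → V)))
    (nyz : s(y, z) ∉ X.image (Sym2.map (Subtype.val : s → V)))
    (nxz : s(x, z) ∉ X.image (Sym2.map (Subtype.val : s → V))) : False := by
  classical
  apply hX {⟨x, hx⟩, ⟨y, hy⟩, ⟨z, hz⟩}
  rw [SimpleGraph.is3Clique_triple_iff]
  refine ⟨?_, ?_, ?_⟩ <;>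
    refine SimpleGraph.deleteEdges_adj.mpr ⟨by simpa using ‹_›, ?_⟩
  · intro h
    exact nxy (Finset.mem_image.mpr ⟨_, Finset.mem_coe.mp h, rfl⟩)
  · intro h
    exact nxz (Finset.mem_image.mpr ⟨_, Finset.mem_coe.mp h, rfl⟩)
  · intro h
    exact nyz (Finset.mem_image.mpr ⟨_, Finset.mem_coe.mp h, rfl⟩)

end Aux2

section Aux3
variable {V : Type*} [Fintype V] [DecidableEq V]

private lemma mem_edgeCut {G : SimpleGraph V} {S : Finset V} {a b : V}
    (hab : G.Adj a b) (ha : a ∈ S) (hb : b ∉ S) : s(a, b) ∈ edgeCut G S := by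
  classical
  simp only [edgeCut, Finset.mem_filter, SimpleGraph.mem_edgeFinset,
    SimpleGraph.mem_edgeSet]
  exact ⟨hab, a, ha, b, hb, rfl⟩

private lemma edgeCut_coe_subset (G : SimpleGraph V) (S : Finset V) :
    ((edgeCut G S : Finset (Sym2 V)) : Set (Sym2 V)) ⊆ G.edgeSet := by
  classical
  intro e he
  have h := Finset.mem_coe.mp he
  simp only [edgeCut, Finset.mem_filter, SimpleGraph.mem_edgeFinset] at h
  exact h.1

private lemma mixed_case {G : SimpleGraph V} {S : Finset V} {A : Finset (Sym2 V)}
    (hA : TriIndep G A) {a b c : V}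
    (hab : G.Adj a b) (hac : G.Adj a c) (hbc : G.Adj b c)
    (ha : a ∈ S) (hb : b ∈ S) (hc : c ∉ S)
    (h1 : s(a, c) ∉ edgeCut G S \ A) (h2 : s(b, c) ∉ edgeCut G S \ A) : False := by
  have hacA : s(a, c) ∈ A := by
    by_contra h; exact h1 (Finset.mem_sdiff.mpr ⟨mem_edgeCut hac ha hc, h⟩)
  have hbcA : s(b, c) ∈ A := by
    by_contra h; exact h2 (Finset.mem_sdiff.mpr ⟨mem_edgeCut hbc hb hc, h⟩)
  exact hA.2 a c b hac hbc.symm hab ⟨hacA, by rwa [Sym2.eq_swap]⟩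

private lemma mixed_case' {G : SimpleGraph V} {S : Finset V} {A : Finset (Sym2 V)}
    (hA : TriIndep G A) {a b c : V}
    (hab : G.Adj a b) (hac : G.Adj a c) (hbc : G.Adj b c)
    (ha : a ∉ S) (hb : b ∉ S) (hc : c ∈ S)
    (h1 : s(a, c) ∉ edgeCut G S \ A) (h2 : s(b, c) ∉ edgeCut G S \ A) : False := by
  have hacA : s(a, c) ∈ A := by
    by_contra h
    refine h1 (Finset.mem_sdiff.mpr ⟨?_, h⟩)
    rw [Sym2.eq_swap]; exact mem_edgeCut hac.symm hc ha
  have hbcA : s(b, c) ∈ A := by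
    by_contra h
    refine h2 (Finset.mem_sdiff.mpr ⟨?_, h⟩)
    rw [Sym2.eq_swap]; exact mem_edgeCut hbc.symm hc hb
  exact hA.2 a c b hac hbc.symm hab ⟨hacA, by rwa [Sym2.eq_swap]⟩

end Aux3

/-- For every finite simple graph `G` and every nonempty proper subset `S` of the
vertex set, `α₁(G) + τ(G) ≤ (α₁(G[S]) + τ(G[S])) + (α₁(G[S̄]) + τ(G[S̄])) + |[S, S̄]|`. -/
theorem stmt0 {V : Type*} [Fintype V] [DecidableEq V] (G : SimpleGraph V) (S : Finset V)
    (hS : S.Nonempty) (hSu : S ≠ Finset.univ) :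
    alpha1 G + tau G ≤
      (alpha1 (G.induce (S : Set V)) + tau (G.induce (S : Set V))) +
        (alpha1 (G.induce ((Sᶜ : Finset V) : Set V)) +
          tau (G.induce ((Sᶜ : Finset V) : Set V))) +
        (edgeCut G S).card := by
  classical
  obtain ⟨A, hA, hAcard⟩ := exists_alpha1 G
  obtain ⟨XS, hXSsub, hXSfree, hXScard⟩ := exists_tau (G.induce (S : Set V))
  obtain ⟨XT, hXTsub, hXTfree, hXTcard⟩ := exists_tau (G.induce ((Sᶜ : Finset V) : Set V))
  set AS := A.filter (fun e => ∀ v ∈ e, v ∈ S) with hASdef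
  set AT := A.filter (fun e => ∀ v ∈ e, v ∉ S) with hATdef
  set DS := XS.image (Sym2.map (Subtype.val : ↥(S : Set V) → V)) with hDSdef
  set DT := XT.image (Sym2.map (Subtype.val : ↥((Sᶜ : Finset V) : Set V) → V)) with hDTdef
  set DC := edgeCut G S \ A with hDCdef
  set D := DS ∪ DT ∪ DC with hDdef
  -- alpha side
  have hAsplit : A ⊆ AS ∪ AT ∪ (A ∩ edgeCut G S) := by
    intro e he
    revert he
    induction e using Sym2.inductionOn with
    | hf a b =>
      intro he
      have hadj : G.Adj a b := (SimpleGraph.mem_edgeSet _).mp (hA.1 (Finset.mem_coe.mpr he))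
      simp only [Finset.mem_union, hASdef, hATdef, Finset.mem_filter, Finset.mem_inter]
      by_cases ha : a ∈ S <;> by_cases hb : b ∈ S
      · refine Or.inl (Or.inl ⟨he, fun v hv => ?_⟩)
        rcases Sym2.mem_iff.mp hv with rfl | rfl <;> assumption
      · exact Or.inr ⟨he, mem_edgeCut hadj ha hb⟩
      · refine Or.inr ⟨he, ?_⟩
        rw [Sym2.eq_swap]; exact mem_edgeCut hadj.symm hb ha
      · refine Or.inl (Or.inr ⟨he, fun v hv => ?_⟩)
        rcases Sym2.mem_iff.mp hv with rfl | rfl <;> assumption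
  have hcardA : A.card ≤ AS.card + AT.card + (A ∩ edgeCut G S).card := by
    have h1 := Finset.card_le_card hAsplit
    have h2 := Finset.card_union_le (AS ∪ AT) (A ∩ edgeCut G S)
    have h3 := Finset.card_union_le AS AT
    omega
  have haS : AS.card ≤ alpha1 (G.induce (S : Set V)) :=
    card_le_alpha1_induce G _ hA (Finset.filter_subset _ _)
      (fun e he v hv => Finset.mem_coe.mpr ((Finset.mem_filter.mp he).2 v hv))
  have haT : AT.card ≤ alpha1 (G.induce ((Sᶜ : Finset V) : Set V)) :=
    card_le_alpha1_induce G _ hA (Finset.filter_subset _ _)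
      (fun e he v hv => by simpa using (Finset.mem_filter.mp he).2 v hv)
  -- tau side
  have hDsub : ((D : Finset (Sym2 V)) : Set (Sym2 V)) ⊆ G.edgeSet := by
    intro e he
    have h := Finset.mem_coe.mp he
    rw [hDdef, Finset.mem_union, Finset.mem_union] at h
    rcases h with (h | h) | h
    · exact image_subset_edgeSet G _ hXSsub (Finset.mem_coe.mpr h)
    · exact image_subset_edgeSet G _ hXTsub (Finset.mem_coe.mpr h)
    · exact edgeCut_coe_subset G S
        (Finset.mem_coe.mpr (Finset.mem_sdiff.mp (hDCdef ▸ h)).1)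
  have hDSsubD : DS ⊆ D := Finset.subset_union_left.trans Finset.subset_union_left
  have hDTsubD : DT ⊆ D := Finset.subset_union_right.trans Finset.subset_union_left
  have hDCsubD : DC ⊆ D := Finset.subset_union_right
  have hDfree : (G.deleteEdges ((D : Finset (Sym2 V)) : Set (Sym2 V))).CliqueFree 3 := by
    intro t ht
    rw [SimpleGraph.is3Clique_iff] at ht
    obtain ⟨x, y, z, hxy, hxz, hyz, rfl⟩ := ht
    rw [SimpleGraph.deleteEdges_adj] at hxy hxz hyz
    obtain ⟨hxy, nxy⟩ := hxy
    obtain ⟨hxz, nxz⟩ := hxz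
    obtain ⟨hyz, nyz⟩ := hyz
    have nD : ∀ {u v : V}, ¬s(u, v) ∈ ((D : Finset (Sym2 V)) : Set (Sym2 V)) →
        s(u, v) ∉ D := fun h hm => h (Finset.mem_coe.mpr hm)
    have nC : ∀ {u v : V}, ¬s(u, v) ∈ ((D : Finset (Sym2 V)) : Set (Sym2 V)) →
        s(u, v) ∉ edgeCut G S \ A := fun h hm => h (Finset.mem_coe.mpr (hDCsubD hm))
    have nCxy := nC nxy
    have nCxz := nC nxz
    have nCyz := nC nyz
    have nCyx : s(y, x) ∉ edgeCut G S \ A := by rw [Sym2.eq_swap]; exact nCxy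
    have nCzx : s(z, x) ∉ edgeCut G S \ A := by rw [Sym2.eq_swap]; exact nCxz
    have nCzy : s(z, y) ∉ edgeCut G S \ A := by rw [Sym2.eq_swap]; exact nCyz
    by_cases hx : x ∈ S <;> by_cases hy : y ∈ S <;> by_cases hz : z ∈ S
    · exact no_inside_triangle G (S : Set V) hXSfree hx hy hz hxy hyz hxz
        (fun h => nD nxy (hDSsubD h)) (fun h => nD nyz (hDSsubD h))
        (fun h => nD nxz (hDSsubD h))
    · exact mixed_case hA hxy hxz hyz hx hy hz nCxz nCyz
    · exact mixed_case hA hxz hxy hyz.symm hx hz hy nCxy nCzy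
    · exact mixed_case' hA hyz hxy.symm hxz.symm hy hz hx nCyx nCzx
    · exact mixed_case hA hyz hxy.symm hxz.symm hy hz hx nCyx nCzx
    · exact mixed_case' hA hxz hxy hyz.symm hx hz hy nCxy nCzy
    · exact mixed_case' hA hxy hxz hyz hx hy hz nCxz nCyz
    · refine no_inside_triangle G ((Sᶜ : Finset V) : Set V) hXTfree
        (by simpa using hx) (by simpa using hy) (by simpa using hz) hxy hyz hxz
        (fun h => nD nxy (hDTsubD h)) (fun h => nD nyz (hDTsubD h))
        (fun h => nD nxz (hDTsubD h))
  have htauG : tau G ≤ DS.card + DT.card + DC.card := by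
    have h1 := tau_le hDsub hDfree
    rw [hDdef] at h1
    have h2 := Finset.card_union_le (DS ∪ DT) DC
    have h3 := Finset.card_union_le DS DT
    omega
  have hDScard : DS.card = tau (G.induce (S : Set V)) := by
    rw [hDSdef, Finset.card_image_of_injective _ (Sym2.map.injective Subtype.val_injective)]
    exact hXScard
  have hDTcard : DT.card = tau (G.induce ((Sᶜ : Finset V) : Set V)) := by
    rw [hDTdef, Finset.card_image_of_injective _ (Sym2.map.injective Subtype.val_injective)]
    exact hXTcard
  have hcut : DC.card + (edgeCut G S ∩ A).card = (edgeCut G S).card :=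
    Finset.card_sdiff_add_card_inter _ _
  have hcomm : (A ∩ edgeCut G S).card = (edgeCut G S ∩ A).card := by
    rw [Finset.inter_comm]
  linarith [hcardA, haS, haT, htauG, hDScard, hDTcard, hcut, hAcard, hcomm]
end

section
/- If every triangular graph H (a graph in which every edge lies in a triangle) on m vertices satisfies α₁(H) + τ(H) ≤ m²/4, then every graph G on n vertices satisfies α₁(G) + τ(G) ≤ n²/4. -/
open Finset

open scoped Classical

namespace EGTaux

variable {V : Type} [Fintype V]

lemma triIndep_subset_edgeFinset {G : SimpleGraph V} {A : Finset (Sym2 V)}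
    (hA : TriIndep G A) : A ⊆ G.edgeFinset := by
  intro e he
  simpa [SimpleGraph.mem_edgeFinset] using hA.1 he

lemma alpha1_bddAbove (G : SimpleGraph V) :
    BddAbove {k | ∃ A : Finset (Sym2 V), TriIndep G A ∧ A.card = k} := by
  refine ⟨G.edgeFinset.card, ?_⟩
  rintro k ⟨A, hA, rfl⟩
  exact Finset.card_le_card (triIndep_subset_edgeFinset hA)

lemma le_alpha1 {G : SimpleGraph V} {A : Finset (Sym2 V)} (hA : TriIndep G A) :
    A.card ≤ alpha1 G :=
  le_csSup (alpha1_bddAbove G) ⟨A, hA, rfl⟩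

lemma exists_alpha1 (G : SimpleGraph V) :
    ∃ A : Finset (Sym2 V), TriIndep G A ∧ A.card = alpha1 G := by
  have hne : {k | ∃ A : Finset (Sym2 V), TriIndep G A ∧ A.card = k}.Nonempty :=
    ⟨0, ∅, ⟨by simp, by simp⟩, rfl⟩
  exact Nat.sSup_mem hne (alpha1_bddAbove G)

lemma tau_le {G : SimpleGraph V} {X : Finset (Sym2 V)}
    (h1 : (X : Set (Sym2 V)) ⊆ G.edgeSet)
    (h2 : (G.deleteEdges (X : Set (Sym2 V))).CliqueFree 3) :
    tau G ≤ X.card :=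
  Nat.sInf_le ⟨X, h1, h2, rfl⟩

lemma exists_tau (G : SimpleGraph V) :
    ∃ X : Finset (Sym2 V), (X : Set (Sym2 V)) ⊆ G.edgeSet ∧
      (G.deleteEdges (X : Set (Sym2 V))).CliqueFree 3 ∧ X.card = tau G := by
  have hbot : G.deleteEdges (G.edgeFinset : Set (Sym2 V)) = ⊥ := by
    ext a b
    simp only [SimpleGraph.deleteEdges_adj, SimpleGraph.bot_adj, iff_false]
    rintro ⟨hadj, hmem⟩
    exact hmem (by rwa [SimpleGraph.coe_edgeFinset, SimpleGraph.mem_edgeSet])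
  have hne : {k | ∃ X : Finset (Sym2 V), (X : Set (Sym2 V)) ⊆ G.edgeSet ∧
      (G.deleteEdges (X : Set (Sym2 V))).CliqueFree 3 ∧ X.card = k}.Nonempty := by
    refine ⟨G.edgeFinset.card, G.edgeFinset, ?_, ?_, rfl⟩
    · rw [SimpleGraph.coe_edgeFinset]
    · rw [hbot]
      exact SimpleGraph.cliqueFree_bot (by norm_num)
  exact Nat.sInf_mem hne

/-- The key vertex-removal lemma. -/
lemma removal (G : SimpleGraph V) (u : V) :
    alpha1 G + tau G ≤
      alpha1 (SimpleGraph.comap (Subtype.val : {x : V // ¬ x = u} → V) G)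
      + tau (SimpleGraph.comap (Subtype.val : {x : V // ¬ x = u} → V) G) + G.degree u := by
  set G' := SimpleGraph.comap (Subtype.val : {x : V // ¬ x = u} → V) G with hG'
  -- a maximum independent subset of the neighborhood of u
  obtain ⟨J, hJmem, hJmax⟩ := Finset.exists_max_image
    (((G.neighborFinset u).powerset).filter (fun S => ∀ x ∈ S, ∀ y ∈ S, ¬ G.Adj x y))
    Finset.card ⟨∅, by simp⟩
  rw [Finset.mem_filter, Finset.mem_powerset] at hJmem
  obtain ⟨hJsub, hJind⟩ := hJmem
  have hJcard : J.card ≤ G.degree u := by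
    rw [← SimpleGraph.card_neighborFinset_eq_degree]
    exact Finset.card_le_card hJsub
  -- transfer of edges avoiding u
  have mapval_edge : ∀ e ∈ G'.edgeSet, Sym2.map Subtype.val e ∈ G.edgeSet := by
    intro e he
    induction e using Sym2.ind with
    | _ a b =>
      rw [SimpleGraph.mem_edgeSet] at he
      simpa [Sym2.map_pair_eq, SimpleGraph.mem_edgeSet, hG'] using he
  -- Part A : alpha1 G ≤ alpha1 G' + J.card
  have partA : alpha1 G ≤ alpha1 G' + J.card := by
    obtain ⟨A, hA, hAcard⟩ := exists_alpha1 G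
    set A₁ := A.filter (fun e => u ∈ e) with hA₁def
    set A₂ := A.filter (fun e => ¬ u ∈ e) with hA₂def
    have hsplit : A₁.card + A₂.card = A.card :=
      Finset.card_filter_add_card_filter_not _
    -- A₁ is the image of an independent set W ⊆ N(u)
    set W := (G.neighborFinset u).filter (fun w => s(u, w) ∈ A) with hWdef
    have hWimg : A₁ = W.image (fun w => s(u, w)) := by
      ext e
      constructor
      · intro he
        rw [hA₁def, Finset.mem_filter] at he
        obtain ⟨heA, heu⟩ := he
        obtain ⟨w, rfl⟩ := Sym2.mem_iff_exists.1 heu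
        have hadj : G.Adj u w := by
          have := hA.1 heA
          rwa [SimpleGraph.mem_edgeSet] at this
        refine Finset.mem_image.2 ⟨w, ?_, rfl⟩
        rw [hWdef, Finset.mem_filter, SimpleGraph.mem_neighborFinset]
        exact ⟨hadj, heA⟩
      · intro he
        obtain ⟨w, hw, rfl⟩ := Finset.mem_image.1 he
        rw [hWdef, Finset.mem_filter] at hw
        rw [hA₁def, Finset.mem_filter]
        exact ⟨hw.2, by simp⟩
    have hWne : ∀ w ∈ W, w ≠ u := by
      intro w hw
      rw [hWdef, Finset.mem_filter, SimpleGraph.mem_neighborFinset] at hw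
      exact fun h => G.irrefl (h ▸ hw.1)
    have hWcard : A₁.card = W.card := by
      rw [hWimg]
      apply Finset.card_image_of_injOn
      intro w hw w' hw' hww'
      have := Sym2.eq_iff.1 hww'
      rcases this with ⟨-, h⟩ | ⟨h1, h2⟩
      · exact h
      · exact absurd h1.symm (hWne w' hw')
    have hWJ : W.card ≤ J.card := by
      apply hJmax
      rw [Finset.mem_filter, Finset.mem_powerset]
      constructor
      · exact Finset.filter_subset _ _
      · intro x hx y hy hxy
        rw [hWdef, Finset.mem_filter, SimpleGraph.mem_neighborFinset] at hx hy
        refine hA.2 x u y (hx.1.symm) hy.1 hxy ⟨?_, hy.2⟩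
        rw [Sym2.eq_swap]
        exact hx.2
    -- A₂ transfers to G'
    set B := G'.edgeFinset.filter (fun e => Sym2.map Subtype.val e ∈ A₂) with hBdef
    have hBimg : B.image (Sym2.map Subtype.val) = A₂ := by
      ext e
      constructor
      · intro he
        obtain ⟨e', he', rfl⟩ := Finset.mem_image.1 he
        rw [hBdef, Finset.mem_filter] at he'
        exact he'.2
      · intro he
        induction e using Sym2.ind with
        | _ a b =>
          have heA : s(a, b) ∈ A := Finset.mem_of_mem_filter _ he
          have hu : ¬ u ∈ s(a, b) := (Finset.mem_filter.1 he).2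
          rw [Sym2.mem_iff] at hu
          push_neg at hu
          have hadj : G.Adj a b := by
            have := hA.1 heA
            rwa [SimpleGraph.mem_edgeSet] at this
          refine Finset.mem_image.2 ⟨s(⟨a, fun h => hu.1 h.symm⟩, ⟨b, fun h => hu.2 h.symm⟩), ?_, by
            simp [Sym2.map_pair_eq]⟩
          rw [hBdef, Finset.mem_filter, SimpleGraph.mem_edgeFinset, SimpleGraph.mem_edgeSet]
          refine ⟨?_, by simpa [Sym2.map_pair_eq] using he⟩
          simpa [hG', SimpleGraph.comap_adj] using hadj
    have hBcard : B.card = A₂.card := by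
      rw [← hBimg]
      exact (Finset.card_image_of_injective _ (Sym2.map.injective Subtype.val_injective)).symm
    have hBtri : TriIndep G' B := by
      constructor
      · intro e he
        have := (Finset.mem_filter.1 he).1
        rwa [SimpleGraph.mem_edgeFinset] at this
      · intro x y z hxy hyz hxz ⟨h1, h2⟩
        have h1' : s(x.val, y.val) ∈ A := by
          have := (Finset.mem_filter.1 h1).2
          rw [Sym2.map_pair_eq] at this
          exact Finset.mem_of_mem_filter _ this
        have h2' : s(y.val, z.val) ∈ A := by
          have := (Finset.mem_filter.1 h2).2
          rw [Sym2.map_pair_eq] at this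
          exact Finset.mem_of_mem_filter _ this
        exact hA.2 x.val y.val z.val hxy hyz hxz ⟨h1', h2'⟩
    have hB_le : B.card ≤ alpha1 G' := le_alpha1 hBtri
    omega
  -- Part B : tau G ≤ tau G' + (degree u - J.card)
  have partB : tau G ≤ tau G' + (G.degree u - J.card) := by
    obtain ⟨X', hX'sub, hX'free, hX'card⟩ := exists_tau G'
    set X := X'.image (Sym2.map Subtype.val)
      ∪ ((G.neighborFinset u) \ J).image (fun w => s(u, w)) with hXdef
    have hXsub : (X : Set (Sym2 V)) ⊆ G.edgeSet := by
      intro e he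
      rw [Finset.mem_coe, hXdef, Finset.mem_union] at he
      rcases he with he | he
      · obtain ⟨e', he', rfl⟩ := Finset.mem_image.1 he
        exact mapval_edge e' (hX'sub he')
      · obtain ⟨w, hw, rfl⟩ := Finset.mem_image.1 he
        have : G.Adj u w := by
          have := (Finset.mem_sdiff.1 hw).1
          rwa [SimpleGraph.mem_neighborFinset] at this
        rwa [SimpleGraph.mem_edgeSet]
    have hmemJ : ∀ w, G.Adj u w → s(u, w) ∉ (X : Set (Sym2 V)) → w ∈ J := by
      intro w hadj hnot
      by_contra hwJ
      apply hnot
      rw [Finset.mem_coe, hXdef, Finset.mem_union]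
      right
      refine Finset.mem_image.2 ⟨w, ?_, rfl⟩
      rw [Finset.mem_sdiff, SimpleGraph.mem_neighborFinset]
      exact ⟨hadj, hwJ⟩
    have hXfree : (G.deleteEdges (X : Set (Sym2 V))).CliqueFree 3 := by
      intro t ht
      obtain ⟨a, b, c, hab, hac, hbc, rfl⟩ := SimpleGraph.is3Clique_iff.1 ht
      rw [SimpleGraph.deleteEdges_adj] at hab hac hbc
      -- helper : no triangle through u
      have hu : ∀ b c : V, G.Adj u b → G.Adj u c → G.Adj b c →
          s(u, b) ∉ (X : Set (Sym2 V)) → s(u, c) ∉ (X : Set (Sym2 V)) → False := by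
        intro b c hub huc hbc hnb hnc
        exact hJind b (hmemJ b hub hnb) c (hmemJ c huc hnc) hbc
      by_cases hau : a = u
      · subst hau
        exact hu b c hab.1 hac.1 hbc.1 hab.2 hac.2
      by_cases hbu : b = u
      · subst hbu
        refine hu a c hab.1.symm hbc.1 hac.1 ?_ hbc.2
        rw [Sym2.eq_swap]
        exact hab.2
      by_cases hcu : c = u
      · subst hcu
        refine hu a b hac.1.symm hbc.1.symm hab.1 ?_ ?_
        · rw [Sym2.eq_swap]
          exact hac.2
        · rw [Sym2.eq_swap]
          exact hbc.2
      -- triangle avoiding u : transfer to G'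
      have trans : ∀ (x y : V) (hx : ¬ x = u) (hy : ¬ y = u), G.Adj x y →
          s(x, y) ∉ (X : Set (Sym2 V)) →
          (G'.deleteEdges (X' : Set (Sym2 {x : V // ¬ x = u}))).Adj ⟨x, hx⟩ ⟨y, hy⟩ := by
        intro x y hx hy hadj hnot
        rw [SimpleGraph.deleteEdges_adj]
        constructor
        · simpa [hG', SimpleGraph.comap_adj] using hadj
        · intro hmem
          apply hnot
          rw [Finset.mem_coe, hXdef, Finset.mem_union]
          left
          refine Finset.mem_image.2 ⟨s(⟨x, hx⟩, ⟨y, hy⟩), hmem, by simp [Sym2.map_pair_eq]⟩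
      have h1 := trans a b hau hbu hab.1 hab.2
      have h2 := trans a c hau hcu hac.1 hac.2
      have h3 := trans b c hbu hcu hbc.1 hbc.2
      exact hX'free {⟨a, hau⟩, ⟨b, hbu⟩, ⟨c, hcu⟩}
        (SimpleGraph.is3Clique_triple_iff.2 ⟨h1, h2, h3⟩)
    have hXcard : X.card ≤ tau G' + (G.degree u - J.card) := by
      calc X.card ≤ (X'.image (Sym2.map Subtype.val)).card
            + (((G.neighborFinset u) \ J).image (fun w => s(u, w))).card :=
            Finset.card_union_le _ _
        _ ≤ X'.card + ((G.neighborFinset u) \ J).card :=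
            Nat.add_le_add (Finset.card_image_le) (Finset.card_image_le)
        _ = tau G' + (G.degree u - J.card) := by
            rw [hX'card, Finset.card_sdiff_of_subset hJsub]
            rfl
    exact le_trans (tau_le hXsub hXfree) hXcard
  omega

lemma sq_mod_four (n : ℕ) : n ^ 2 % 4 = 0 ∨ n ^ 2 % 4 = 1 := by
  rcases Nat.even_or_odd n with ⟨t, rfl⟩ | ⟨t, rfl⟩
  · left
    have h : (t + t) ^ 2 = 4 * t ^ 2 := by ring
    rw [h]
    exact Nat.mul_mod_right 4 _
  · right
    have h : (2 * t + 1) ^ 2 = 1 + 4 * (t ^ 2 + t) := by ring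
    rw [h]
    simp [Nat.add_mul_mod_self_left]

lemma main_nat
    (h : ∀ (W : Type) [Fintype W] (H : SimpleGraph W),
      (∀ x y : W, H.Adj x y → ∃ z : W, H.Adj x z ∧ H.Adj y z) →
      (alpha1 H + tau H : ℝ) ≤ (Fintype.card W : ℝ) ^ 2 / 4) :
    ∀ (n : ℕ) (V : Type) [Fintype V] (G : SimpleGraph V),
      Fintype.card V = n → 4 * (alpha1 G + tau G) ≤ n ^ 2 := by
  intro n
  induction n using Nat.strong_induction_on with
  | _ n IH =>
    intro V _ G hcard
    by_cases htri : ∀ x y : V, G.Adj x y → ∃ z : V, G.Adj x z ∧ G.Adj y z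
    · have hreal := h V G htri
      rw [hcard] at hreal
      have h4 : ((4 * (alpha1 G + tau G) : ℕ) : ℝ) ≤ ((n ^ 2 : ℕ) : ℝ) := by
        push_cast
        linarith
      exact_mod_cast h4
    · push_neg at htri
      obtain ⟨x, y, hxy, hno⟩ := htri
      -- choose endpoint of smaller degree
      have hdisj : Disjoint (G.neighborFinset x) (G.neighborFinset y) := by
        rw [Finset.disjoint_left]
        intro z hz hz'
        rw [SimpleGraph.mem_neighborFinset] at hz hz'
        exact hno z hz hz'
      have hsum : G.degree x + G.degree y ≤ n := by
        have : (G.neighborFinset x ∪ G.neighborFinset y).card ≤ Fintype.card V := by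
          rw [← Finset.card_univ]
          exact Finset.card_le_card (Finset.subset_univ _)
        rw [Finset.card_union_of_disjoint hdisj] at this
        rw [← hcard]
        exact this
      obtain ⟨u, hdeg⟩ : ∃ u : V, 2 * G.degree u ≤ n := by
        rcases le_total (G.degree x) (G.degree y) with hle | hle
        · exact ⟨x, by omega⟩
        · exact ⟨y, by omega⟩
      have hn1 : Fintype.card {z : V // ¬ z = u} = n - 1 := by
        rw [Fintype.card_subtype_compl, Fintype.card_subtype_eq, hcard]
      have hnpos : 1 ≤ n := by
        rw [← hcard]
        exact Fintype.card_pos_iff.2 ⟨u⟩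
      have hrem := removal G u
      have hIH := IH (n - 1) (by omega) {z : V // ¬ z = u}
        (SimpleGraph.comap (Subtype.val : {z : V // ¬ z = u} → V) G) hn1
      have hsq := sq_mod_four n
      have hexp : (n - 1) ^ 2 + 2 * n ≤ n ^ 2 + 1 := by
        obtain ⟨m, rfl⟩ := Nat.exists_eq_add_of_le hnpos
        have h1 : 1 + m - 1 = m := by omega
        rw [h1]
        have h2 : (1 + m) ^ 2 = m ^ 2 + 2 * m + 1 := by ring
        rw [h2]
        linarith
      have hfin : 4 * (alpha1 G + tau G) ≤ n ^ 2 + 1 := by linarith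
      rcases hsq with hsq | hsq <;>
        · generalize hM : n ^ 2 = M at hfin hsq ⊢
          omega

end EGTaux

/-- If every triangular graph (every edge lies in a triangle) on `m` vertices satisfies
`α₁(H) + τ(H) ≤ m²/4`, then every graph `G` on `n` vertices satisfies
`α₁(G) + τ(G) ≤ n²/4`. -/
theorem stmt3
    (h : ∀ (W : Type) [Fintype W] (H : SimpleGraph W),
      (∀ x y : W, H.Adj x y → ∃ z : W, H.Adj x z ∧ H.Adj y z) →
      (alpha1 H + tau H : ℝ) ≤ (Fintype.card W : ℝ) ^ 2 / 4) :
    ∀ (V : Type) [Fintype V] (G : SimpleGraph V),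
      (alpha1 G + tau G : ℝ) ≤ (Fintype.card V : ℝ) ^ 2 / 4 := by
  intro V _ G
  have := EGTaux.main_nat h (Fintype.card V) V G rfl
  have h4 : ((4 * (alpha1 G + tau G) : ℕ) : ℝ) ≤ ((Fintype.card V ^ 2 : ℕ) : ℝ) := by
    exact_mod_cast this
  push_cast at h4
  linarith
end

section
/- Let G be a finite simple graph, let A ⊆ E(G) be a triangle-independent set, and let S ⊆ V(G) be a set such that the induced subgraph G[S] has independence number at most t. Then the number of edges of A with one endpoint in S and one endpoint outside S satisfies |[S, S̄] ∩ A| ≤ t·(n − |S|), where n = |V(G)|. -/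
open Finset

open scoped Classical in
lemma mem_edgeCut' {V : Type*} [Fintype V] (G : SimpleGraph V) (S : Finset V)
    (e : Sym2 V) : e ∈ edgeCut G S ↔ e ∈ G.edgeFinset ∧ ∃ x ∈ S, ∃ y ∉ S, e = s(x, y) := by
  rw [edgeCut]
  exact Finset.mem_filter

set_option maxHeartbeats 1000000 in
/-- If `A` is a triangle-independent set in `G` and the induced subgraph `G[S]` has
independence number at most `t`, then `|[S, S̄] ∩ A| ≤ t(n − |S|)`. -/
theorem stmt7 {V : Type*} [Fintype V] [DecidableEq V] (G : SimpleGraph V)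
    (A : Finset (Sym2 V)) (hA : TriIndep G A)
    (S : Finset V) (t : ℕ) (ht : indepNum (G.induce (S : Set V)) ≤ t) :
    (edgeCut G S ∩ A).card ≤ t * (Fintype.card V - S.card) := by
  classical
  have key : ∀ v ∈ Sᶜ, ((edgeCut G S ∩ A).filter (fun e => v ∈ e)).card ≤ t := by
    intro v hv
    have hvS : v ∉ S := Finset.mem_compl.mp hv
    set Iv : Finset V := S.filter (fun u => s(u, v) ∈ A) with hIvdef
    have hsub2 : (edgeCut G S ∩ A).filter (fun e => v ∈ e) ⊆ Iv.image (fun u => s(u, v)) := by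
      intro e he
      simp only [Finset.mem_filter, Finset.mem_inter] at he
      obtain ⟨⟨hcut, hA'⟩, hve⟩ := he
      rw [mem_edgeCut'] at hcut
      obtain ⟨_, x, hx, y, hy, rfl⟩ := hcut
      have hvy : v = y := by
        rcases Sym2.mem_iff.mp hve with rfl | rfl
        · exact absurd hx hvS
        · rfl
      subst hvy
      exact Finset.mem_image.mpr ⟨x, Finset.mem_filter.mpr ⟨hx, hA'⟩, rfl⟩
    have hadj : ∀ u ∈ Iv, G.Adj u v := by
      intro u hu
      have := (Finset.mem_filter.mp hu).2
      exact (SimpleGraph.mem_edgeSet G).mp (hA.1 this)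
    have hindep : ∀ x ∈ Iv, ∀ y ∈ Iv, ¬G.Adj x y := by
      intro x hx y hy hxy
      have h1 : s(x, v) ∈ A := (Finset.mem_filter.mp hx).2
      have h2 : s(v, y) ∈ A := by rw [Sym2.eq_swap]; exact (Finset.mem_filter.mp hy).2
      exact hA.2 x v y (hadj x hx) ((hadj y hy).symm) hxy ⟨h1, h2⟩
    -- transfer Iv to an independent set in the induced subgraph
    have hIvS : ∀ u ∈ Iv, u ∈ (S : Set V) := fun u hu => (Finset.mem_filter.mp hu).1
    set I' : Finset (S : Set V) := Iv.subtype (fun u => u ∈ (S : Set V)) with hI'def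
    have hI'card : I'.card = Iv.card := by
      rw [hI'def, Finset.card_subtype, Finset.filter_true_of_mem hIvS]
    have hI'indep : ∀ x ∈ I', ∀ y ∈ I', ¬(G.induce (S : Set V)).Adj x y := by
      intro x hx y hy hxy
      exact hindep x.1 (Finset.mem_subtype.mp hx) y.1 (Finset.mem_subtype.mp hy) hxy
    have hbdd : BddAbove {k | ∃ I : Finset (S : Set V),
        (∀ x ∈ I, ∀ y ∈ I, ¬(G.induce (S : Set V)).Adj x y) ∧ I.card = k} := by
      refine ⟨Fintype.card (S : Set V), ?_⟩
      rintro k ⟨I, -, rfl⟩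
      exact Finset.card_le_univ I
    have hle : Iv.card ≤ indepNum (G.induce (S : Set V)) := by
      rw [← hI'card]
      exact le_csSup hbdd ⟨I', hI'indep, rfl⟩
    calc ((edgeCut G S ∩ A).filter (fun e => v ∈ e)).card
        ≤ (Iv.image (fun u => s(u, v))).card := Finset.card_le_card hsub2
      _ ≤ Iv.card := Finset.card_image_le
      _ ≤ t := hle.trans ht
  have hsub : edgeCut G S ∩ A ⊆ Sᶜ.biUnion (fun v => (edgeCut G S ∩ A).filter (fun e => v ∈ e)) := by
    intro e he
    simp only [Finset.mem_biUnion, Finset.mem_filter, Finset.mem_compl]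
    have heC := (Finset.mem_inter.mp he).1
    rw [mem_edgeCut'] at heC
    obtain ⟨_, x, hx, y, hy, rfl⟩ := heC
    exact ⟨y, hy, he, by simp⟩
  calc (edgeCut G S ∩ A).card
      ≤ (Sᶜ.biUnion (fun v => (edgeCut G S ∩ A).filter (fun e => v ∈ e))).card :=
        Finset.card_le_card hsub
    _ ≤ ∑ v ∈ Sᶜ, ((edgeCut G S ∩ A).filter (fun e => v ∈ e)).card :=
        Finset.card_biUnion_le
    _ ≤ ∑ _v ∈ Sᶜ, t := Finset.sum_le_sum key
    _ = t * (Fintype.card V - S.card) := by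
        rw [Finset.sum_const, smul_eq_mul, Finset.card_compl, mul_comm]
end

section
/- Let G be an n-vertex graph such that α₁(G) + τ_B(G) > n²/4 while every proper induced subgraph H of G satisfies α₁(H) + τ_B(H) ≤ |V(H)|²/4. If S is a maximal clique in G, then there is a vertex v ∉ S such that the induced subgraph G[S ∪ {v}] is isomorphic to K_{|S|+1}⁻, the complete graph on |S|+1 vertices with one edge deleted; in particular, v is adjacent to exactly |S| − 1 vertices of S. -/
open Finset

section AuxSplit

lemma split_exists {V : Type*} [DecidableEq V] (a b : V → ℕ) :
    ∀ (N : ℕ) (S : Finset V), S.card ≤ N →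
    ∃ S₁ S₂ : Finset V, S₁ ∪ S₂ = S ∧ Disjoint S₁ S₂ ∧
      S₁.card ≤ S₂.card + 1 ∧ S₂.card ≤ S₁.card + 1 ∧
      2 * ((∑ u ∈ S₁, a u) + ∑ u ∈ S₂, b u) ≤ ∑ u ∈ S, (a u + b u) := by
  intro N
  induction N with
  | zero =>
    intro S hS
    refine ⟨∅, ∅, ?_, ?_, ?_, ?_, ?_⟩ <;>
      simp_all [Finset.card_eq_zero.mp (Nat.le_zero.mp hS)]
  | succ N ih =>
    intro S hS
    rcases Nat.lt_or_ge S.card 2 with h2 | h2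
    · -- card 0 or 1
      have hle : S.card = 0 ∨ S.card = 1 := by omega
      rcases hle with hle | hle
      · obtain rfl := Finset.card_eq_zero.mp hle
        exact ⟨∅, ∅, by simp, by simp, by simp, by simp, by simp⟩
      · obtain ⟨u, rfl⟩ := Finset.card_eq_one.mp hle
        rcases le_or_gt (a u) (b u) with hab | hab
        · exact ⟨{u}, ∅, by simp, by simp, by simp, by simp, by simp; omega⟩
        · exact ⟨∅, {u}, by simp, by simp, by simp, by simp, by simp; omega⟩
    · have hSne : S.Nonempty := Finset.card_pos.mp (by omega)
      obtain ⟨u, hu⟩ := hSne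
      have hv' : (S.erase u).Nonempty := by
        rw [← Finset.card_pos, Finset.card_erase_of_mem hu]; omega
      obtain ⟨v, hv⟩ := hv'
      have huv : v ≠ u := Finset.ne_of_mem_erase hv
      have hvS : v ∈ S := Finset.mem_of_mem_erase hv
      set S' := (S.erase u).erase v with hS'
      have hcard' : S'.card = S.card - 2 := by
        rw [hS', Finset.card_erase_of_mem hv, Finset.card_erase_of_mem hu]
        omega
      have huS' : u ∉ S' := fun h => (Finset.ne_of_mem_erase (Finset.mem_of_mem_erase h)) rfl
      have hvS' : v ∉ S' := fun h => (Finset.ne_of_mem_erase h) rfl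
      have hSeq : insert u (insert v S') = S := by
        rw [hS', Finset.insert_erase hv, Finset.insert_erase hu]
      obtain ⟨S₁, S₂, hun, hdis, hc1, hc2, hcost⟩ := ih S' (by omega)
      have h1S : S₁ ⊆ S' := hun ▸ Finset.subset_union_left
      have h2S : S₂ ⊆ S' := hun ▸ Finset.subset_union_right
      have hsum : ∑ x ∈ S, (a x + b x)
          = (a u + b u) + (a v + b v) + ∑ x ∈ S', (a x + b x) := by
        rw [← hSeq, Finset.sum_insert (by simp [huS', huv.symm]),
          Finset.sum_insert hvS']; ring
      rcases le_or_gt (a u + b v) (a v + b u) with hc | hc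
      · refine ⟨insert u S₁, insert v S₂, ?_, ?_, ?_, ?_, ?_⟩
        · rw [Finset.insert_union, Finset.union_insert, hun]; exact hSeq
        · rw [Finset.disjoint_insert_left]
          constructor
          · simp only [Finset.mem_insert, not_or]
            exact ⟨huv.symm, fun h => huS' (h2S h)⟩
          · rw [Finset.disjoint_insert_right]
            exact ⟨fun h => hvS' (h1S h), hdis⟩
        · rw [Finset.card_insert_of_notMem (fun h => huS' (h1S h)),
            Finset.card_insert_of_notMem (fun h => hvS' (h2S h))]; omega
        · rw [Finset.card_insert_of_notMem (fun h => huS' (h1S h)),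
            Finset.card_insert_of_notMem (fun h => hvS' (h2S h))]; omega
        · rw [Finset.sum_insert (fun h => huS' (h1S h)),
            Finset.sum_insert (fun h => hvS' (h2S h)), hsum]
          omega
      · refine ⟨insert v S₁, insert u S₂, ?_, ?_, ?_, ?_, ?_⟩
        · rw [Finset.insert_union, Finset.union_insert, hun, Finset.insert_comm]
          exact hSeq
        · rw [Finset.disjoint_insert_left]
          constructor
          · simp only [Finset.mem_insert, not_or]
            exact ⟨huv, fun h => hvS' (h2S h)⟩
          · rw [Finset.disjoint_insert_right]
            exact ⟨fun h => huS' (h1S h), hdis⟩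
        · rw [Finset.card_insert_of_notMem (fun h => hvS' (h1S h)),
            Finset.card_insert_of_notMem (fun h => huS' (h2S h))]; omega
        · rw [Finset.card_insert_of_notMem (fun h => hvS' (h1S h)),
            Finset.card_insert_of_notMem (fun h => huS' (h2S h))]; omega
        · rw [Finset.sum_insert (fun h => hvS' (h1S h)),
            Finset.sum_insert (fun h => huS' (h2S h)), hsum]
          omega

end AuxSplit

section Aux
open scoped Classical
variable {V : Type*} [Fintype V] (G : SimpleGraph V)

lemma alpha1_exists : ∃ A : Finset (Sym2 V), TriIndep G A ∧ A.card = alpha1 G := by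
  have h0 : (0 : ℕ) ∈ {k | ∃ A : Finset (Sym2 V), TriIndep G A ∧ A.card = k} :=
    ⟨∅, ⟨by simp, by simp⟩, rfl⟩
  have hb : BddAbove {k | ∃ A : Finset (Sym2 V), TriIndep G A ∧ A.card = k} := by
    refine ⟨Fintype.card (Sym2 V), fun k hk => ?_⟩
    obtain ⟨A, _, rfl⟩ := hk
    simpa using Finset.card_le_univ A
  exact Nat.sSup_mem ⟨0, h0⟩ hb

lemma alpha1_ge (A : Finset (Sym2 V)) (h : TriIndep G A) : A.card ≤ alpha1 G := by
  have hb : BddAbove {k | ∃ A : Finset (Sym2 V), TriIndep G A ∧ A.card = k} := by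
    refine ⟨Fintype.card (Sym2 V), fun k hk => ?_⟩
    obtain ⟨A, _, rfl⟩ := hk
    simpa using Finset.card_le_univ A
  exact le_csSup hb ⟨A, h, rfl⟩

lemma tauB_le (X : Finset (Sym2 V)) (h1 : (X : Set (Sym2 V)) ⊆ G.edgeSet)
    (h2 : (G.deleteEdges (X : Set (Sym2 V))).Colorable 2) : tauB G ≤ X.card :=
  Nat.sInf_le ⟨X, h1, h2, rfl⟩

lemma tauB_exists : ∃ X : Finset (Sym2 V), (X : Set (Sym2 V)) ⊆ G.edgeSet ∧
    (G.deleteEdges (X : Set (Sym2 V))).Colorable 2 ∧ X.card = tauB G := by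
  have hne : ∃ X : Finset (Sym2 V), (X : Set (Sym2 V)) ⊆ G.edgeSet ∧
      (G.deleteEdges (X : Set (Sym2 V))).Colorable 2 ∧ X.card = G.edgeFinset.card := by
    classical
    refine ⟨G.edgeFinset, by simp, ?_, rfl⟩
    refine ⟨SimpleGraph.Coloring.mk (fun _ => 0) ?_⟩
    intro a b hab
    rw [SimpleGraph.deleteEdges_adj] at hab
    exact absurd (by simpa using hab.1) hab.2
  have hmem : (G.edgeFinset.card : ℕ) ∈ {k | ∃ X : Finset (Sym2 V),
      (X : Set (Sym2 V)) ⊆ G.edgeSet ∧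
      (G.deleteEdges (X : Set (Sym2 V))).Colorable 2 ∧ X.card = k} := hne
  exact Nat.sInf_mem ⟨_, hmem⟩

omit [Fintype V] in
lemma card_within (P : Finset V) [DecidableEq V] (W : Finset (Sym2 V))
    (hW : ∀ e ∈ W, ¬e.IsDiag ∧ ∀ x ∈ e, x ∈ P) :
    2 * W.card + P.card ≤ P.card * P.card := by
  have hsub : W ∪ P.image Sym2.diag ⊆ P.sym2 := by
    intro e he
    rcases Finset.mem_union.mp he with he | he
    · exact Finset.mem_sym2_iff.mpr (hW e he).2
    · obtain ⟨x, hx, rfl⟩ := Finset.mem_image.mp he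
      exact Finset.mem_sym2_iff.mpr (by simp [hx, Sym2.diag])
  have hdisj : Disjoint W (P.image Sym2.diag) := by
    rw [Finset.disjoint_left]
    intro e he he'
    obtain ⟨x, _, rfl⟩ := Finset.mem_image.mp he'
    exact (hW _ he).1 (Sym2.diag_isDiag x)
  have hcard : W.card + P.card ≤ P.sym2.card := by
    have := Finset.card_le_card hsub
    rwa [Finset.card_union_of_disjoint hdisj,
      Finset.card_image_of_injective _ Sym2.diag_injective] at this
  rw [Finset.card_sym2, Nat.choose_two_right, Nat.add_sub_cancel] at hcard
  have hev : (2 : ℕ) ∣ P.card * (P.card + 1) := (Nat.even_mul_succ_self P.card).two_dvd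
  have h3 : 2 * (W.card + P.card) ≤ P.card * (P.card + 1) := by
    calc 2 * (W.card + P.card) ≤ 2 * ((P.card + 1) * P.card / 2) :=
          Nat.mul_le_mul_left 2 hcard
    _ = P.card * (P.card + 1) := by
          rw [mul_comm (P.card + 1), Nat.mul_div_cancel' hev]
  have : P.card * (P.card + 1) = P.card * P.card + P.card := by ring
  linarith

end Aux

open scoped Classical in
/-- If `G` is a minimal counterexample to the conjecture `α₁ + τ_B ≤ n²/4` and `S` is a
maximal clique in `G`, then there is a vertex `v ∉ S` such that `G[S ∪ {v}]` is an
induced copy of `K_{|S|+1}⁻`: `v` is nonadjacent to exactly one vertex of `S` and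
adjacent to the remaining `|S| − 1` vertices of `S`. -/
theorem stmt10 {V : Type*} [Fintype V] (G : SimpleGraph V) (n : ℕ)
    (hn : Fintype.card V = n)
    (hctx : (alpha1 G + tauB G : ℝ) > n ^ 2 / 4)
    (hmin : ∀ S : Finset V, S ≠ Finset.univ →
      (alpha1 (G.induce (S : Set V)) + tauB (G.induce (S : Set V)) : ℝ) ≤
        (S.card : ℝ) ^ 2 / 4)
    (S : Finset V) (hclique : G.IsClique (S : Set V))
    (hmax : ∀ v ∉ S, ¬G.IsClique (insert v (S : Set V))) :
    ∃ v ∉ S, (∃ w ∈ S, ¬G.Adj v w ∧ ∀ u ∈ S, u ≠ w → G.Adj v u) ∧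
      (S.filter (fun u => G.Adj v u)).card = S.card - 1 := by
  classical
  -- integer versions of the hypotheses
  have h1 : n ^ 2 < 4 * (alpha1 G + tauB G) := by
    have : ((n : ℝ)) ^ 2 < 4 * ((alpha1 G : ℝ) + (tauB G : ℝ)) := by
      rw [gt_iff_lt, div_lt_iff₀ (by norm_num)] at hctx
      push_cast at hctx ⊢
      linarith
    exact_mod_cast this
  -- empty vertex type: contradiction
  rcases isEmpty_or_nonempty V with hV | hV
  · exfalso
    have hn0 : n = 0 := by rw [← hn]; exact Fintype.card_eq_zero
    obtain ⟨A, _, hAcard⟩ := alpha1_exists G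
    have ha : alpha1 G = 0 := by
      rw [← hAcard]
      have : A = ∅ := Finset.eq_empty_of_isEmpty A
      simp [this]
    have ht : tauB G = 0 := by
      have := tauB_le G ∅ (by simp) (by
        exact SimpleGraph.Colorable.of_isEmpty 2)
      simpa using this
    rw [hn0, ha, ht] at h1
    omega
  by_cases hex : ∃ v, v ∉ S ∧ S.card - 1 ≤ (S.filter (fun u => G.Adj v u)).card
  · -- main conclusion
    obtain ⟨v, hvS, hc⟩ := hex
    set F := S.filter (fun u => G.Adj v u) with hF
    have hFS : F ⊆ S := Finset.filter_subset _ _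
    have hFne : F ≠ S := by
      intro hEq
      apply hmax v hvS
      rw [SimpleGraph.isClique_insert]
      refine ⟨hclique, fun b hb hne => ?_⟩
      have hbS : b ∈ S := hb
      have : b ∈ F := hEq ▸ hbS
      exact (Finset.mem_filter.mp this).2
    have hFlt : F.card < S.card := Finset.card_lt_card (hFS.ssubset_of_ne hFne)
    have hFcard : F.card = S.card - 1 := by omega
    have hdiff : (S \ F).Nonempty := by
      rw [← Finset.card_pos, Finset.card_sdiff_of_subset hFS]; omega
    obtain ⟨w, hw⟩ := hdiff
    have hwS : w ∈ S := (Finset.mem_sdiff.mp hw).1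
    have hwF : w ∉ F := (Finset.mem_sdiff.mp hw).2
    refine ⟨v, hvS, ⟨w, hwS, ?_, ?_⟩, hFcard⟩
    · intro hadj; exact hwF (Finset.mem_filter.mpr ⟨hwS, hadj⟩)
    · intro u huS hune
      by_contra hnadj
      have hu : u ∈ S \ F :=
        Finset.mem_sdiff.mpr ⟨huS, fun h => hnadj (Finset.mem_filter.mp h).2⟩
      have hcard1 : (S \ F).card = 1 := by rw [Finset.card_sdiff_of_subset hFS]; omega
      exact hune (Finset.card_le_one.mp (le_of_eq hcard1) u hu w hw)
  · exfalso
    push_neg at hex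
    -- hex : ∀ v, v ∉ S → (S.filter ...).card < S.card - 1
    have hSne : S.Nonempty := by
      by_contra h
      rw [Finset.not_nonempty_iff_eq_empty] at h
      obtain ⟨v⟩ := hV
      have hv : v ∉ S := by simp [h]
      have := hex v hv
      rw [h] at this
      simp at this
    set T : Finset V := Finset.univ \ S with hT
    have hTmem : ∀ x : V, x ∈ T ↔ x ∉ S := by intro x; simp [hT]
    have hTuniv : T ≠ Finset.univ := by
      obtain ⟨x, hx⟩ := hSne
      intro h
      exact ((hTmem x).mp (h ▸ Finset.mem_univ x)) hx
    have hst : S.card + T.card = n := by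
      have h1 : T.card = Finset.univ.card - S.card := Finset.card_sdiff_of_subset (Finset.subset_univ S)
      have h2 : S.card ≤ Finset.univ.card := Finset.card_le_univ S
      rw [Finset.card_univ, hn] at h1 h2
      omega
    -- the induced subgraph H on T
    have hminT := hmin T hTuniv
    have hH : 4 * (alpha1 (G.induce (T : Set V)) + tauB (G.induce (T : Set V))) ≤ T.card ^ 2 := by
      have hr : 4 * ((alpha1 (G.induce (T : Set V)) : ℝ) + (tauB (G.induce (T : Set V)) : ℝ))
          ≤ ((T.card : ℝ)) ^ 2 := by
        linarith
      exact_mod_cast hr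
    set H := G.induce ((T : Set V)) with hHdef
    have hHadj : ∀ x y : (T : Set V), H.Adj x y ↔ G.Adj x.val y.val := by
      intro x y; rw [hHdef]; exact Iff.rfl
    -- degree hypothesis
    have hdeg : ∀ x ∈ T, (S.filter (fun u => G.Adj x u)).card + 2 ≤ S.card := by
      intro x hx
      have := hex x ((hTmem x).mp hx)
      omega
    ------------------------------------------------------------------
    -- STEP 1 : the alpha1 bound
    ------------------------------------------------------------------
    obtain ⟨A, ⟨hAsub, hAtri⟩, hAcard⟩ := alpha1_exists G
    have hAedge : ∀ e ∈ A, e ∈ G.edgeSet := fun e he => hAsub he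
    set p1 : Sym2 V → Prop := fun e => ∀ x ∈ e, x ∉ S with hp1
    set p2 : Sym2 V → Prop := fun e => ∀ x ∈ e, x ∈ S with hp2
    have hsplitA : A.card = (A.filter p1).card + (((A.filter (fun e => ¬ p1 e)).filter p2).card
        + ((A.filter (fun e => ¬ p1 e)).filter (fun e => ¬ p2 e)).card) := by
      rw [Finset.card_filter_add_card_filter_not (p := p2),
        Finset.card_filter_add_card_filter_not (p := p1)]
    -- 1a : A1 embeds into H
    have hA1le : (A.filter p1).card ≤ alpha1 H := by
      set A1' : Finset (Sym2 ((T : Set V) : Type _)) :=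
        Finset.univ.filter (fun e => e.map (Subtype.val) ∈ A.filter p1) with hA1'
      have himg : (A.filter p1) = A1'.image (Sym2.map Subtype.val) := by
        ext e
        constructor
        · intro he
          induction e using Sym2.ind with
          | _ a b =>
            have hp := (Finset.mem_filter.mp he).2
            have haT : a ∈ (T : Set V) := by
              rw [Finset.mem_coe, hTmem]; exact hp a (Sym2.mem_mk_left a b)
            have hbT : b ∈ (T : Set V) := by
              rw [Finset.mem_coe, hTmem]; exact hp b (Sym2.mem_mk_right a b)
            refine Finset.mem_image.mpr ⟨s(⟨a, haT⟩, ⟨b, hbT⟩), ?_, by rw [Sym2.map_pair_eq]⟩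
            rw [hA1', Finset.mem_filter]
            exact ⟨Finset.mem_univ _, by rw [Sym2.map_pair_eq]; exact he⟩
        · intro he
          obtain ⟨e', he', rfl⟩ := Finset.mem_image.mp he
          exact (Finset.mem_filter.mp he').2
      have hcardeq : (A.filter p1).card = A1'.card := by
        rw [himg, Finset.card_image_of_injective _ (Sym2.map.injective Subtype.val_injective)]
      rw [hcardeq]
      apply alpha1_ge
      constructor
      · intro e he
        have he' : e ∈ A1' := he
        induction e using Sym2.ind with
        | _ a b =>
          have := (Finset.mem_filter.mp he').2
          rw [Sym2.map_pair_eq] at this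
          have hadj : G.Adj a.val b.val := hAedge _ (Finset.mem_of_mem_filter _ this)
          exact (hHadj a b).mpr hadj
      · intro x y z hxy hyz hxz ⟨hm1, hm2⟩
        have hm1' : s(x.val, y.val) ∈ A := by
          have := (Finset.mem_filter.mp (Finset.mem_filter.mp hm1).2).1
          rwa [Sym2.map_pair_eq] at this
        have hm2' : s(y.val, z.val) ∈ A := by
          have := (Finset.mem_filter.mp (Finset.mem_filter.mp hm2).2).1
          rwa [Sym2.map_pair_eq] at this
        exact hAtri x.val y.val z.val ((hHadj x y).mp hxy) ((hHadj y z).mp hyz)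
          ((hHadj x z).mp hxz) ⟨hm1', hm2'⟩
    -- 1b : A2 is a matching inside the clique S
    have hmatch : 2 * (A.filter p2).card ≤ S.card := by
      set f : Sym2 V → Finset V :=
        Sym2.lift ⟨fun a b => {a, b}, fun a b => Finset.pair_comm a b⟩ with hf
      have hfmem : ∀ (x : V) (e : Sym2 V), x ∈ f e ↔ x ∈ e := by
        intro x e
        induction e using Sym2.ind with
        | _ a b => simp [hf]
      have hbiU : (A.filter p2).biUnion f ⊆ S := by
        intro x hx
        obtain ⟨e, he, hxe⟩ := Finset.mem_biUnion.mp hx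
        exact (Finset.mem_filter.mp he).2 x ((hfmem x e).mp hxe)
      have hdisj : ∀ e₁ ∈ (A.filter p2), ∀ e₂ ∈ (A.filter p2), e₁ ≠ e₂ →
          Disjoint (f e₁) (f e₂) := by
        intro e₁ he₁ e₂ he₂ hne
        rw [Finset.disjoint_left]
        intro y hy1 hy2
        have hy1' : y ∈ e₁ := (hfmem y e₁).mp hy1
        have hy2' : y ∈ e₂ := (hfmem y e₂).mp hy2
        obtain ⟨x, rfl⟩ := Sym2.mem_iff_exists.mp hy1'
        obtain ⟨z, rfl⟩ := Sym2.mem_iff_exists.mp hy2'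
        have hxz : x ≠ z := fun h => hne (by rw [h])
        have hxS : x ∈ S := (Finset.mem_filter.mp he₁).2 x (Sym2.mem_mk_right y x)
        have hzS : z ∈ S := (Finset.mem_filter.mp he₂).2 z (Sym2.mem_mk_right y z)
        have hyx : G.Adj y x := (SimpleGraph.mem_edgeSet G).mp
          (hAedge _ (Finset.mem_of_mem_filter _ he₁))
        have hyz : G.Adj y z := (SimpleGraph.mem_edgeSet G).mp
          (hAedge _ (Finset.mem_of_mem_filter _ he₂))
        have hxzadj : G.Adj x z := hclique hxS hzS hxz
        refine hAtri x y z hyx.symm hyz hxzadj ⟨?_, ?_⟩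
        · rw [Sym2.eq_swap]; exact Finset.mem_of_mem_filter _ he₁
        · exact Finset.mem_of_mem_filter _ he₂
      have hcards : ∀ e ∈ A.filter p2, (f e).card = 2 := by
        intro e he
        have hed : ¬ e.IsDiag :=
          G.not_isDiag_of_mem_edgeSet (hAedge _ (Finset.mem_of_mem_filter _ he))
        induction e using Sym2.ind with
        | _ a b =>
          rw [Sym2.mk_isDiag_iff] at hed
          simp [hf, Finset.card_pair hed]
      calc 2 * (A.filter p2).card = ∑ _e ∈ A.filter p2, 2 := by
            rw [Finset.sum_const, smul_eq_mul, mul_comm]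
      _ = ∑ e ∈ A.filter p2, (f e).card := (Finset.sum_congr rfl hcards).symm
      _ = ((A.filter p2).biUnion f).card := (Finset.card_biUnion hdisj).symm
      _ ≤ S.card := Finset.card_le_card hbiU
    -- 1c : cross edges of A
    have hcross : ((A.filter (fun e => ¬ p1 e)).filter (fun e => ¬ p2 e)).card ≤ T.card := by
      set A3 := (A.filter (fun e => ¬ p1 e)).filter (fun e => ¬ p2 e) with hA3
      have hA3S : ∀ e ∈ A3, ∃ x ∈ e, x ∈ S := by
        intro e he
        have := (Finset.mem_filter.mp (Finset.mem_filter.mp he).1).2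
        simp only [hp1] at this
        push_neg at this
        exact this
      have hA3T : ∀ e ∈ A3, ∃ y, y ∈ e ∧ y ∉ S := by
        intro e he
        have := (Finset.mem_filter.mp he).2
        simp only [hp2] at this
        push_neg at this
        obtain ⟨y, hy1, hy2⟩ := this
        exact ⟨y, hy1, hy2⟩
      set g : Sym2 V → V := fun e => if h : ∃ y, y ∈ e ∧ y ∉ S then h.choose else hV.some with hg
      have hgmem : ∀ e ∈ A3, g e ∈ e ∧ g e ∉ S := by
        intro e he
        have hh := hA3T e he
        rw [hg]
        simp only [dif_pos hh]
        exact hh.choose_spec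
      apply Finset.card_le_card_of_injOn g
      · intro e he
        rw [Finset.mem_coe, hTmem]
        exact (hgmem e he).2
      · intro e₁ he₁ e₂ he₂ heq
        have h1 := hgmem e₁ he₁
        have h2 := hgmem e₂ he₂
        set y := g e₁ with hy
        have hy2 : y ∈ e₂ := heq ▸ h2.1
        obtain ⟨x, hex1⟩ := Sym2.mem_iff_exists.mp h1.1
        obtain ⟨z, hex2⟩ := Sym2.mem_iff_exists.mp hy2
        have hxS : x ∈ S := by
          obtain ⟨x', hx'1, hx'2⟩ := hA3S e₁ he₁
          rw [hex1, Sym2.mem_iff] at hx'1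
          rcases hx'1 with rfl | rfl
          · exact absurd hx'2 h1.2
          · exact hx'2
        have hzS : z ∈ S := by
          obtain ⟨z', hz'1, hz'2⟩ := hA3S e₂ he₂
          rw [hex2, Sym2.mem_iff] at hz'1
          rcases hz'1 with rfl | rfl
          · exact absurd hz'2 (heq ▸ h2.2)
          · exact hz'2
        by_cases hxz : x = z
        · rw [hex1, hex2, hxz]
        · exfalso
          have hyx : G.Adj y x := (SimpleGraph.mem_edgeSet G).mp
            (hAedge _ (hex1 ▸ Finset.mem_of_mem_filter _ (Finset.mem_of_mem_filter _ he₁)))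
          have hyz : G.Adj y z := (SimpleGraph.mem_edgeSet G).mp
            (hAedge _ (hex2 ▸ Finset.mem_of_mem_filter _ (Finset.mem_of_mem_filter _ he₂)))
          refine hAtri x y z hyx.symm hyz (hclique hxS hzS hxz) ⟨?_, ?_⟩
          · rw [Sym2.eq_swap, ← hex1]
            exact Finset.mem_of_mem_filter _ (Finset.mem_of_mem_filter _ he₁)
          · rw [← hex2]
            exact Finset.mem_of_mem_filter _ (Finset.mem_of_mem_filter _ he₂)
    have hA2le : ((A.filter (fun e => ¬ p1 e)).filter p2).card ≤ (A.filter p2).card := by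
      apply Finset.card_le_card
      intro e he
      exact Finset.mem_filter.mpr ⟨Finset.mem_of_mem_filter _ (Finset.mem_filter.mp he).1,
        (Finset.mem_filter.mp he).2⟩
    have hAlphaBound : alpha1 G ≤ alpha1 H + (A.filter p2).card + T.card := by
      rw [← hAcard, hsplitA]
      have := hA1le
      omega
    ------------------------------------------------------------------
    -- STEP 2 : the tauB bound
    ------------------------------------------------------------------
    obtain ⟨XT, hXTsub, hXTcol, hXTcard⟩ := tauB_exists H
    obtain ⟨C⟩ := hXTcol
    set cT : V → Fin 2 := fun x => if h : x ∈ (T : Set V) then C ⟨x, h⟩ else 0 with hcT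
    set aF : V → ℕ := fun u => (T.filter (fun x => G.Adj u x ∧ cT x = 0)).card with haF
    set bF : V → ℕ := fun u => (T.filter (fun x => G.Adj u x ∧ cT x = 1)).card with hbF
    obtain ⟨S₁, S₂, hun, hdis, hk1, hk2, hcost⟩ := split_exists aF bF S.card S le_rfl
    have hS1S : S₁ ⊆ S := hun ▸ Finset.subset_union_left
    have hS2S : S₂ ⊆ S := hun ▸ Finset.subset_union_right
    set c' : V → Fin 2 := fun x => if x ∈ S₁ then 0 else if x ∈ S₂ then 1 else cT x with hc'
    have hc'T : ∀ x ∉ S, c' x = cT x := by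
      intro x hx
      simp only [hc', if_neg (fun h => hx (hS1S h)), if_neg (fun h => hx (hS2S h))]
    have hc'S1 : ∀ x ∈ S₁, c' x = 0 := by
      intro x hx; simp only [hc', if_pos hx]
    have hc'S2 : ∀ x ∈ S₂, c' x = 1 := by
      intro x hx
      simp only [hc', if_neg (fun h => Finset.disjoint_left.mp hdis h hx), if_pos hx]
    set X0 : Finset (Sym2 V) := XT.image (Sym2.map Subtype.val) with hX0
    set Xm : Finset (Sym2 V) :=
      G.edgeFinset.filter (fun e => (∃ x ∈ e, x ∈ S) ∧ (e.map c').IsDiag) with hXm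
    set X : Finset (Sym2 V) := X0 ∪ Xm with hX
    have hXsub : (X : Set (Sym2 V)) ⊆ G.edgeSet := by
      intro e he
      rw [Finset.mem_coe, hX, Finset.mem_union] at he
      rcases he with he | he
      · obtain ⟨e', he', rfl⟩ := Finset.mem_image.mp he
        have : e' ∈ H.edgeSet := hXTsub he'
        induction e' using Sym2.ind with
        | _ a b =>
          rw [Sym2.map_pair_eq]
          rw [SimpleGraph.mem_edgeSet] at this ⊢
          exact (hHadj a b).mp this
      · exact (SimpleGraph.mem_edgeFinset).mp (Finset.mem_of_mem_filter _ he)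
    have hXcol : (G.deleteEdges (X : Set (Sym2 V))).Colorable 2 := by
      refine ⟨SimpleGraph.Coloring.mk c' ?_⟩
      intro x y hadj
      rw [SimpleGraph.deleteEdges_adj] at hadj
      intro hcc
      apply hadj.2
      rw [Finset.mem_coe, hX, Finset.mem_union]
      by_cases hS : x ∈ S ∨ y ∈ S
      · right
        rw [hXm, Finset.mem_filter]
        refine ⟨SimpleGraph.mem_edgeFinset.mpr hadj.1, ?_, ?_⟩
        · rcases hS with h | h
          · exact ⟨x, Sym2.mem_mk_left x y, h⟩
          · exact ⟨y, Sym2.mem_mk_right x y, h⟩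
        · rw [Sym2.map_pair_eq, Sym2.mk_isDiag_iff]
          exact hcc
      · left
        push_neg at hS
        have hxT : x ∈ (T : Set V) := by rw [Finset.mem_coe, hTmem]; exact hS.1
        have hyT : y ∈ (T : Set V) := by rw [Finset.mem_coe, hTmem]; exact hS.2
        have hHxy : H.Adj ⟨x, hxT⟩ ⟨y, hyT⟩ := (hHadj _ _).mpr hadj.1
        by_cases hXTm : s((⟨x, hxT⟩ : (T : Set V)), (⟨y, hyT⟩ : (T : Set V))) ∈ XT
        · rw [hX0]
          refine Finset.mem_image.mpr ⟨_, hXTm, ?_⟩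
          rw [Sym2.map_pair_eq]
        · exfalso
          have hdel : (H.deleteEdges (XT : Set (Sym2 ((T : Set V) : Type _)))).Adj
              ⟨x, hxT⟩ ⟨y, hyT⟩ := by
            rw [SimpleGraph.deleteEdges_adj]
            exact ⟨hHxy, fun h => hXTm h⟩
          have := C.valid hdel
          apply this
          have hx' : c' x = C ⟨x, hxT⟩ := by
            rw [hc'T x hS.1, hcT]
            simp only [dif_pos hxT]
          have hy' : c' y = C ⟨y, hyT⟩ := by
            rw [hc'T y hS.2, hcT]
            simp only [dif_pos hyT]
          rw [← hx', ← hy', hcc]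
    have hTauBound : tauB G ≤ XT.card + Xm.card := by
      calc tauB G ≤ X.card := tauB_le G X hXsub hXcol
      _ ≤ X0.card + Xm.card := Finset.card_union_le _ _
      _ ≤ XT.card + Xm.card := by
            rw [hX0]
            exact Nat.add_le_add_right Finset.card_image_le _
    ------------------------------------------------------------------
    -- STEP 3 : decomposing Xm
    ------------------------------------------------------------------
    set q1 : Sym2 V → Prop := fun e => ∀ x ∈ e, x ∈ S₁ with hq1
    set q2 : Sym2 V → Prop := fun e => ∀ x ∈ e, x ∈ S₂ with hq2
    have hsplitXm : Xm.card = (Xm.filter q1).card + (((Xm.filter (fun e => ¬ q1 e)).filter q2).card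
        + ((Xm.filter (fun e => ¬ q1 e)).filter (fun e => ¬ q2 e)).card) := by
      rw [Finset.card_filter_add_card_filter_not (p := q2),
        Finset.card_filter_add_card_filter_not (p := q1)]
    -- 3a : edges inside S₁
    have hd1 : 2 * (Xm.filter q1).card + S₁.card ≤ S₁.card * S₁.card := by
      apply card_within S₁
      intro e he
      refine ⟨G.not_isDiag_of_mem_edgeSet (SimpleGraph.mem_edgeFinset.mp
        (Finset.mem_of_mem_filter _ (Finset.mem_of_mem_filter _ he))), ?_⟩
      have := (Finset.mem_filter.mp he).2
      simp only [hq1] at this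
      exact this
    -- 3b : edges inside S₂
    have hd2 : 2 * ((Xm.filter (fun e => ¬ q1 e)).filter q2).card + S₂.card
        ≤ S₂.card * S₂.card := by
      apply card_within S₂
      intro e he
      refine ⟨G.not_isDiag_of_mem_edgeSet (SimpleGraph.mem_edgeFinset.mp
        (Finset.mem_of_mem_filter _ (Finset.mem_of_mem_filter _
          (Finset.mem_of_mem_filter _ he)))), ?_⟩
      have := (Finset.mem_filter.mp he).2
      simp only [hq2] at this
      exact this
    -- 3c : monochromatic cross edges
    have hd3 : ((Xm.filter (fun e => ¬ q1 e)).filter (fun e => ¬ q2 e)).card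
        ≤ (∑ u ∈ S₁, aF u) + ∑ u ∈ S₂, bF u := by
      have hsub3 : ((Xm.filter (fun e => ¬ q1 e)).filter (fun e => ¬ q2 e)) ⊆
          S.biUnion (fun u =>
            (T.filter (fun x => G.Adj u x ∧ cT x = c' u)).image (fun x => s(u, x))) := by
        intro e he
        have heXm : e ∈ Xm := Finset.mem_of_mem_filter _ (Finset.mem_of_mem_filter _ he)
        have hnq1 : ¬ q1 e := (Finset.mem_filter.mp (Finset.mem_filter.mp he).1).2
        have hnq2 : ¬ q2 e := (Finset.mem_filter.mp he).2
        have hedge : e ∈ G.edgeSet := SimpleGraph.mem_edgeFinset.mp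
          (Finset.mem_of_mem_filter _ heXm)
        have hprop := (Finset.mem_filter.mp heXm).2
        obtain ⟨⟨xs, hxs, hxsS⟩, hmono⟩ := hprop
        -- decompose e
        induction e using Sym2.ind with
        | _ a b =>
          have hadj : G.Adj a b := hedge
          rw [Sym2.map_pair_eq, Sym2.mk_isDiag_iff] at hmono
          -- at least one endpoint in S; claim exactly one
          have habS : a ∈ S ∨ b ∈ S := by
            rw [Sym2.mem_iff] at hxs
            rcases hxs with rfl | rfl
            · exact Or.inl hxsS
            · exact Or.inr hxsS
          have hnotboth : ¬ (a ∈ S ∧ b ∈ S) := by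
            rintro ⟨haS, hbS⟩
            have ha1 : a ∈ S₁ ∨ a ∈ S₂ := by
              have : a ∈ S₁ ∪ S₂ := hun ▸ haS
              exact Finset.mem_union.mp this
            have hb1 : b ∈ S₁ ∨ b ∈ S₂ := by
              have : b ∈ S₁ ∪ S₂ := hun ▸ hbS
              exact Finset.mem_union.mp this
            rcases ha1 with ha | ha <;> rcases hb1 with hb | hb
            · apply hnq1
              simp only [hq1]
              intro x hx
              rw [Sym2.mem_iff] at hx
              rcases hx with rfl | rfl <;> assumption
            · rw [hc'S1 a ha, hc'S2 b hb] at hmono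
              exact absurd hmono (by decide)
            · rw [hc'S2 a ha, hc'S1 b hb] at hmono
              exact absurd hmono (by decide)
            · apply hnq2
              simp only [hq2]
              intro x hx
              rw [Sym2.mem_iff] at hx
              rcases hx with rfl | rfl <;> assumption
          -- now a ∈ S, b ∉ S or symmetric
          have hkey : ∀ u x : V, u ∈ S → x ∉ S → G.Adj u x → c' u = c' x →
              s(u, x) ∈ S.biUnion (fun u =>
                (T.filter (fun y => G.Adj u y ∧ cT y = c' u)).image (fun y => s(u, y))) := by
            intro u x huS hxS huxadj hcux
            refine Finset.mem_biUnion.mpr ⟨u, huS, Finset.mem_image.mpr ⟨x, ?_, rfl⟩⟩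
            refine Finset.mem_filter.mpr ⟨(hTmem x).mpr hxS, huxadj, ?_⟩
            rw [← hc'T x hxS, ← hcux]
          rcases habS with haS | hbS
          · have hbS : b ∉ S := fun h => hnotboth ⟨haS, h⟩
            exact hkey a b haS hbS hadj hmono
          · have haS : a ∉ S := fun h => hnotboth ⟨h, hbS⟩
            have := hkey b a hbS haS hadj.symm hmono.symm
            rwa [Sym2.eq_swap] at this
      calc ((Xm.filter (fun e => ¬ q1 e)).filter (fun e => ¬ q2 e)).card
          ≤ (S.biUnion (fun u =>
            (T.filter (fun x => G.Adj u x ∧ cT x = c' u)).image (fun x => s(u, x)))).card :=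
            Finset.card_le_card hsub3
      _ ≤ ∑ u ∈ S, ((T.filter (fun x => G.Adj u x ∧ cT x = c' u)).image (fun x => s(u, x))).card :=
            Finset.card_biUnion_le
      _ ≤ ∑ u ∈ S, (T.filter (fun x => G.Adj u x ∧ cT x = c' u)).card :=
            Finset.sum_le_sum (fun u _ => Finset.card_image_le)
      _ = (∑ u ∈ S₁, aF u) + ∑ u ∈ S₂, bF u := by
            rw [← hun, Finset.sum_union hdis]
            congr 1
            · refine Finset.sum_congr rfl fun u hu => ?_
              simp only [haF]
              congr 1
              refine Finset.filter_congr fun x hx => ?_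
              rw [hc'S1 u hu]
            · refine Finset.sum_congr rfl fun u hu => ?_
              simp only [hbF]
              congr 1
              refine Finset.filter_congr fun x hx => ?_
              rw [hc'S2 u hu]
    ------------------------------------------------------------------
    -- STEP 4 : double counting the S-T edges
    ------------------------------------------------------------------
    have habsum : ∀ u : V, aF u + bF u = (T.filter (fun x => G.Adj u x)).card := by
      intro u
      simp only [haF, hbF]
      have h0 : (T.filter (fun x => G.Adj u x ∧ cT x = 0))
          = (T.filter (fun x => G.Adj u x)).filter (fun x => cT x = 0) := by
        rw [Finset.filter_filter]
      have h1 : (T.filter (fun x => G.Adj u x ∧ cT x = 1))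
          = (T.filter (fun x => G.Adj u x)).filter (fun x => ¬ (cT x = 0)) := by
        rw [Finset.filter_filter]
        refine Finset.filter_congr fun x hx => ?_
        constructor
        · rintro ⟨h, h'⟩; exact ⟨h, by rw [h']; decide⟩
        · rintro ⟨h, h'⟩
          refine ⟨h, ?_⟩
          have : cT x = 0 ∨ cT x = 1 := by omega
          tauto
      rw [h0, h1, Finset.card_filter_add_card_filter_not]
    have hE : (∑ u ∈ S, (aF u + bF u)) + 2 * T.card ≤ T.card * S.card := by
      have hdd : (∑ u ∈ S, (T.filter (fun x => G.Adj u x)).card)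
          = ∑ x ∈ T, (S.filter (fun u => G.Adj x u)).card := by
        simp_rw [Finset.card_filter]
        rw [Finset.sum_comm]
        refine Finset.sum_congr rfl fun x _ => Finset.sum_congr rfl fun u _ => ?_
        have : G.Adj u x ↔ G.Adj x u := G.adj_comm u x
        simp [this]
      have hsum2 : ∑ x ∈ T, ((S.filter (fun u => G.Adj x u)).card + 2) ≤ ∑ x ∈ T, S.card :=
        Finset.sum_le_sum (fun x hx => hdeg x hx)
      rw [Finset.sum_add_distrib, Finset.sum_const, Finset.sum_const, smul_eq_mul,
        smul_eq_mul] at hsum2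
      have : ∑ u ∈ S, (aF u + bF u) = ∑ x ∈ T, (S.filter (fun u => G.Adj x u)).card := by
        rw [← hdd]
        exact Finset.sum_congr rfl fun u _ => habsum u
      rw [this]
      omega
    ------------------------------------------------------------------
    -- STEP 5 : the final arithmetic
    ------------------------------------------------------------------
    have hkk : S₁.card + S₂.card = S.card := by
      rw [← hun, Finset.card_union_of_disjoint hdis]
    -- abbreviations
    set s := S.card
    set t := T.card
    set k1 := S₁.card
    set k2 := S₂.card
    set m2 := (A.filter p2).card
    set aG := alpha1 G
    set tG := tauB G
    set aH := alpha1 H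
    set tH := tauB H
    set cost := (∑ u ∈ S₁, aF u) + ∑ u ∈ S₂, bF u with hcostdef
    set E := ∑ u ∈ S, (aF u + bF u) with hEdef
    -- collect the numbered facts
    have f1 : n ^ 2 < 4 * (aG + tG) := h1
    have f2 : 4 * (aH + tH) ≤ t ^ 2 := hH
    have f3 : aG ≤ aH + m2 + t := hAlphaBound
    have f4 : 2 * m2 ≤ s := hmatch
    have f5 : tG ≤ tH + ((Xm.filter q1).card + (((Xm.filter (fun e => ¬ q1 e)).filter q2).card
        + ((Xm.filter (fun e => ¬ q1 e)).filter (fun e => ¬ q2 e)).card)) := by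
      rw [← hsplitXm]
      omega
    have f6 : 2 * cost ≤ E := hcost
    have f7 : E + 2 * t ≤ t * s := hE
    have f8 : n = s + t := by omega
    -- bound everything
    have key : 4 * (aG + tG) ≤ n ^ 2 := by
      have g1 : 4 * (Xm.filter q1).card + 2 * k1 ≤ 2 * (k1 * k1) := by omega
      have g2 : 4 * ((Xm.filter (fun e => ¬ q1 e)).filter q2).card + 2 * k2
          ≤ 2 * (k2 * k2) := by omega
      have g3 : 4 * ((Xm.filter (fun e => ¬ q1 e)).filter (fun e => ¬ q2 e)).card
          ≤ 2 * E := by omega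
      have hpar : k2 = k1 ∨ k2 = k1 + 1 ∨ k1 = k2 + 1 := by omega
      have htt : t ^ 2 = t * t := sq t
      have hts : t * s = s * t := Nat.mul_comm t s
      rcases hpar with hp | hp | hp
      · -- s = 2 k1
        have hs : s = 2 * k1 := by omega
        have hnn : n ^ 2 = s * s + 2 * (s * t) + t * t := by rw [f8]; ring
        have hss : s * s = 4 * (k1 * k1) := by rw [hs]; ring
        have hk2sq : k2 * k2 = k1 * k1 := by rw [hp]
        linarith [f2, f3, f4, f5, f6, f7, g1, g2, g3]
      · have hs : s = 2 * k1 + 1 := by omega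
        have f4' : 2 * m2 + 1 ≤ s := by omega
        have hnn : n ^ 2 = s * s + 2 * (s * t) + t * t := by rw [f8]; ring
        have hss : s * s = 4 * (k1 * k1) + 4 * k1 + 1 := by rw [hs]; ring
        have hk2sq : k2 * k2 = k1 * k1 + 2 * k1 + 1 := by rw [hp]; ring
        linarith [f2, f3, f4', f5, f6, f7, g1, g2, g3]
      · have hs : s = 2 * k2 + 1 := by omega
        have f4' : 2 * m2 + 1 ≤ s := by omega
        have hnn : n ^ 2 = s * s + 2 * (s * t) + t * t := by rw [f8]; ring
        have hss : s * s = 4 * (k2 * k2) + 4 * k2 + 1 := by rw [hs]; ring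
        have hk1sq : k1 * k1 = k2 * k2 + 2 * k2 + 1 := by rw [hp]; ring
        linarith [f2, f3, f4', f5, f6, f7, g1, g2, g3]
    exact absurd (lt_of_lt_of_le f1 key) (lt_irrefl _)
end

section
/- If G is a triangle-free n-vertex graph, then α₁(G) + τ_B(G) ≤ n²/4. -/
open Finset

open scoped Classical

section Aux
variable {V : Type*} [Fintype V] (G : SimpleGraph V)

variable {V : Type*} [Fintype V] (G : SimpleGraph V)


lemma aux_alpha1_le :
    sSup {k | ∃ A : Finset (Sym2 V), TriIndep G A ∧ A.card = k} ≤ G.edgeFinset.card := by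
  have hne : {k | ∃ A : Finset (Sym2 V), TriIndep G A ∧ A.card = k}.Nonempty :=
    ⟨0, ∅, ⟨by simp, by simp⟩, by simp⟩
  apply csSup_le hne
  rintro k ⟨A, hA, rfl⟩
  exact Finset.card_le_card fun e he => SimpleGraph.mem_edgeFinset.mpr (hA.1 he)

lemma aux_count (h : G.CliqueFree 3) {v : V}
    (hv : ∀ u, G.degree u ≤ G.degree v) :
    G.edgeFinset.card +
      (G.edgeFinset.filter (fun e => ∀ x ∈ e, x ∉ G.neighborFinset v)).card ≤
      (Fintype.card V - G.degree v) * G.degree v := by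
  set S := G.neighborFinset v with hS
  have hSindep : ∀ a ∈ S, ∀ b ∈ S, ¬ G.Adj a b := by
    intro a ha b hb hab
    exact h {v, a, b} (SimpleGraph.is3Clique_triple_iff.mpr
      ⟨(G.mem_neighborFinset v a).mp ha, (G.mem_neighborFinset v b).mp hb, hab⟩)
  have hdeg : ∀ u, G.degree u = (G.edgeFinset.filter (fun e => u ∈ e)).card := by
    intro u
    rw [← SimpleGraph.card_incidenceFinset_eq_degree, SimpleGraph.incidenceFinset_eq_filter]
  have key : ∀ e ∈ G.edgeFinset,
      1 + (if (∀ x ∈ e, x ∉ S) then 1 else 0) ≤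
        ((univ \ S).filter (fun u => u ∈ e)).card := by
    intro e he
    induction e with
    | _ a b =>
      have hab : G.Adj a b := G.mem_edgeSet.mp (SimpleGraph.mem_edgeFinset.mp he)
      have hor : a ∉ S ∨ b ∉ S := by
        by_contra hcon
        push_neg at hcon
        exact hSindep a hcon.1 b hcon.2 hab
      by_cases hX : ∀ x ∈ (s(a,b) : Sym2 V), x ∉ S
      · have ha : a ∉ S := hX a (by simp)
        have hb : b ∉ S := hX b (by simp)
        rw [if_pos hX]
        have hsub : ({a, b} : Finset V) ⊆ (univ \ S).filter (fun u => u ∈ (s(a,b) : Sym2 V)) := by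
          intro x hx
          simp only [Finset.mem_insert, Finset.mem_singleton] at hx
          rcases hx with rfl | rfl <;> simp [ha, hb]
        calc 1 + 1 = ({a, b} : Finset V).card := (Finset.card_pair hab.ne).symm
          _ ≤ _ := Finset.card_le_card hsub
      · rw [if_neg hX]
        rcases hor with hw | hw
        · exact Nat.one_le_iff_ne_zero.mpr (Finset.card_ne_zero_of_mem
            (by simp [hw] : a ∈ (univ \ S).filter (fun u => u ∈ (s(a,b) : Sym2 V))))
        · exact Nat.one_le_iff_ne_zero.mpr (Finset.card_ne_zero_of_mem
            (by simp [hw] : b ∈ (univ \ S).filter (fun u => u ∈ (s(a,b) : Sym2 V))))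
  calc G.edgeFinset.card +
      (G.edgeFinset.filter (fun e => ∀ x ∈ e, x ∉ S)).card
      = ∑ e ∈ G.edgeFinset, (1 + if (∀ x ∈ e, x ∉ S) then 1 else 0) := by
        rw [Finset.sum_add_distrib, Finset.sum_const, smul_eq_mul, mul_one,
          Finset.card_filter]
    _ ≤ ∑ e ∈ G.edgeFinset, ((univ \ S).filter (fun u => u ∈ e)).card :=
        Finset.sum_le_sum key
    _ = ∑ u ∈ univ \ S, G.degree u := by
        simp_rw [hdeg, Finset.card_filter]
        rw [Finset.sum_comm]
    _ ≤ (univ \ S).card * G.degree v := by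
        rw [← smul_eq_mul]
        exact Finset.sum_le_card_nsmul _ _ _ (fun u _ => hv u)
    _ = (Fintype.card V - G.degree v) * G.degree v := by
        rw [Finset.card_sdiff_of_subset (Finset.subset_univ S), Finset.card_univ]
        rfl

end Aux

/-- If `G` is a triangle-free `n`-vertex graph, then `α₁(G) + τ_B(G) ≤ n²/4`. -/
theorem stmt11 {V : Type*} [Fintype V] (G : SimpleGraph V) (h : G.CliqueFree 3) :
    (alpha1 G + tauB G : ℝ) ≤ (Fintype.card V : ℝ) ^ 2 / 4 := by
  unfold alpha1 tauB
  have halpha := aux_alpha1_le G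
  cases isEmpty_or_nonempty V with
  | inl hV =>
    have hm : G.edgeFinset = ∅ := Finset.eq_empty_of_isEmpty _
    have htau : sInf {k | ∃ X : Finset (Sym2 V), (X : Set (Sym2 V)) ⊆ G.edgeSet ∧
        (G.deleteEdges (X : Set (Sym2 V))).Colorable 2 ∧ X.card = k} ≤ 0 :=
      Nat.sInf_le ⟨∅, by simp, ⟨⟨fun v => isEmptyElim v, fun {a b} _ => isEmptyElim a⟩⟩, by simp⟩
    have h0 : G.edgeFinset.card = 0 := by rw [hm]; rfl
    have h1 : sSup {k | ∃ A : Finset (Sym2 V), TriIndep G A ∧ A.card = k} = 0 := by omega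
    have h2 : sInf {k | ∃ X : Finset (Sym2 V), (X : Set (Sym2 V)) ⊆ G.edgeSet ∧
        (G.deleteEdges (X : Set (Sym2 V))).Colorable 2 ∧ X.card = k} = 0 := by omega
    rw [h1, h2]
    norm_num
  | inr hV =>
    obtain ⟨v, -, hv⟩ := Finset.exists_max_image Finset.univ (fun u => G.degree u) ⟨Classical.arbitrary V, mem_univ _⟩
    set S := G.neighborFinset v with hSdef
    set X := G.edgeFinset.filter (fun e => ∀ x ∈ e, x ∉ S) with hXdef
    have hSindep : ∀ a ∈ S, ∀ b ∈ S, ¬ G.Adj a b := by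
      intro a ha b hb hab
      exact h {v, a, b} (SimpleGraph.is3Clique_triple_iff.mpr
        ⟨(G.mem_neighborFinset v a).mp ha, (G.mem_neighborFinset v b).mp hb, hab⟩)
    have hcol : (G.deleteEdges (X : Set (Sym2 V))).Colorable 2 := by
      refine ⟨SimpleGraph.Coloring.mk (fun u => if u ∈ S then (0 : Fin 2) else 1) ?_⟩
      intro a b hadj
      rw [SimpleGraph.deleteEdges_adj] at hadj
      obtain ⟨hab, hnX⟩ := hadj
      by_cases ha : a ∈ S <;> by_cases hb : b ∈ S
      · exact absurd hab (hSindep a ha b hb)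
      · simp [ha, hb]
      · simp [ha, hb]
      · exfalso
        apply hnX
        refine Finset.mem_coe.mpr (Finset.mem_filter.mpr ⟨SimpleGraph.mem_edgeFinset.mpr (G.mem_edgeSet.mpr hab), ?_⟩)
        intro x hx
        rw [Sym2.mem_iff] at hx
        rcases hx with rfl | rfl <;> assumption
    have htau : sInf {k | ∃ X : Finset (Sym2 V), (X : Set (Sym2 V)) ⊆ G.edgeSet ∧
        (G.deleteEdges (X : Set (Sym2 V))).Colorable 2 ∧ X.card = k} ≤ X.card :=
      Nat.sInf_le ⟨X, fun e he => SimpleGraph.mem_edgeFinset.mp (Finset.mem_filter.mp he).1, hcol, rfl⟩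
    have hcount := aux_count G h (fun u => hv u (mem_univ u))
    have hdlen : G.degree v ≤ Fintype.card V := by
      rw [← Finset.card_univ]
      exact Finset.card_le_card (Finset.subset_univ _)
    have hnat : sSup {k | ∃ A : Finset (Sym2 V), TriIndep G A ∧ A.card = k} +
        sInf {k | ∃ X : Finset (Sym2 V), (X : Set (Sym2 V)) ⊆ G.edgeSet ∧
          (G.deleteEdges (X : Set (Sym2 V))).Colorable 2 ∧ X.card = k} ≤
        (Fintype.card V - G.degree v) * G.degree v :=
      le_trans (add_le_add halpha htau) hcount
    have := Nat.cast_le (α := ℝ) |>.mpr hnat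
    push_cast [Nat.cast_sub hdlen] at this
    nlinarith [sq_nonneg ((Fintype.card V : ℝ) - 2 * (G.degree v : ℝ)), this]
end

section
/- If G is an n-vertex graph with no induced subgraph isomorphic to K₄⁻ (the complete graph on 4 vertices with one edge deleted), then α₁(G) + τ(G) ≤ n²/4. -/
open Finset

namespace Stmt14Aux
open scoped Classical
variable {V : Type*} [Fintype V] {G : SimpleGraph V}

/-! ### Mantel's theorem, finset version -/

lemma card_filter_mem (E : Finset (Sym2 V)) (u : V) :
    (E.filter (fun e => u ∈ e)).card = (univ.filter (fun w => s(u,w) ∈ E)).card := by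
  refine (Finset.card_bij (fun w _ => s(u,w)) ?_ ?_ ?_).symm
  · intro w hw
    simp only [mem_filter, mem_univ, true_and] at hw ⊢
    exact ⟨hw, Sym2.mem_mk_left u w⟩
  · intro w1 hw1 w2 hw2 he
    rcases Sym2.eq_iff.1 he with ⟨-, h⟩ | ⟨h1, h2⟩
    · exact h
    · exact h2.trans h1
  · intro e he
    simp only [mem_filter] at he
    obtain ⟨he', hu⟩ := he
    obtain ⟨w, hw⟩ := (Sym2.mem_iff_exists).1 hu
    exact ⟨w, by simp only [mem_filter, mem_univ, true_and]; rw [← hw]; exact he', hw.symm⟩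

lemma mantel_finset (E : Finset (Sym2 V))
    (htf : ∀ x y z : V, s(x,y) ∈ E → s(y,z) ∈ E → s(x,z) ∈ E → False) :
    (E.card : ℝ) ≤ (Fintype.card V : ℝ)^2/4 := by
  rcases isEmpty_or_nonempty V with hV | hV
  · have : E = ∅ := Finset.eq_empty_of_isEmpty E
    simp [this]
  set N : V → Finset V := fun v => univ.filter (fun w => s(v,w) ∈ E) with hN
  obtain ⟨v, -, hv⟩ := Finset.exists_max_image univ (fun v => (N v).card) univ_nonempty
  set Δ := (N v).card with hΔ
  have hsub : E ⊆ (univ \ N v).biUnion (fun u => E.filter (fun e => u ∈ e)) := by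
    intro e he
    induction e using Sym2.ind with
    | _ a b =>
    have hne : a ∉ N v ∨ b ∉ N v := by
      by_contra hc
      push_neg at hc
      have ha : s(v,a) ∈ E := by simpa [hN] using hc.1
      have hb : s(v,b) ∈ E := by simpa [hN] using hc.2
      exact htf a v b (by rwa [Sym2.eq_swap]) hb he
    rcases hne with hna | hnb
    · exact mem_biUnion.2 ⟨a, by simp [hna], by simp [he]⟩
    · exact mem_biUnion.2 ⟨b, by simp [hnb], by simp [he]⟩
  have hcard : E.card ≤ (Fintype.card V - Δ) * Δ := by
    calc E.card ≤ ((univ \ N v).biUnion (fun u => E.filter (fun e => u ∈ e))).card :=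
          Finset.card_le_card hsub
      _ ≤ ∑ u ∈ univ \ N v, (E.filter (fun e => u ∈ e)).card := Finset.card_biUnion_le
      _ ≤ ∑ _u ∈ univ \ N v, Δ := by
          refine Finset.sum_le_sum fun u _ => ?_
          rw [card_filter_mem E u]
          exact hv u (mem_univ u)
      _ = (Fintype.card V - Δ) * Δ := by
          rw [Finset.sum_const, smul_eq_mul, card_sdiff_of_subset (subset_univ _), card_univ]
  have hΔle : Δ ≤ Fintype.card V := by
    rw [hΔ]; exact (card_filter_le _ _).trans (by rw [card_univ])
  have hc : ((Fintype.card V - Δ : ℕ) : ℝ) = (Fintype.card V : ℝ) - Δ := Nat.cast_sub hΔle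
  calc (E.card : ℝ) ≤ ((Fintype.card V - Δ) * Δ : ℕ) := by exact_mod_cast hcard
    _ = ((Fintype.card V : ℝ) - Δ) * Δ := by push_cast [hc]; ring
    _ ≤ (Fintype.card V : ℝ)^2/4 := by nlinarith [sq_nonneg ((Fintype.card V : ℝ) - 2*Δ)]

/-! ### The diamond lemma -/

lemma diamond (hK : IsEmpty (K4minus ↪g G)) {a b c d : V}
    (hab : G.Adj a b) (hac : G.Adj a c) (hbc : G.Adj b c)
    (had : G.Adj a d) (hbd : G.Adj b d) (hcd : c ≠ d) : G.Adj c d := by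
  by_contra hn
  have hinj : Function.Injective ![c, d, a, b] := by
    intro i j hij
    fin_cases i <;> fin_cases j <;> simp_all <;>
      first
      | rfl
      | exact absurd hij hcd
      | exact absurd hij.symm hcd
      | exact absurd hij hac.ne'
      | exact absurd hij hbc.ne'
      | exact absurd hij had.ne'
      | exact absurd hij hbd.ne'
      | exact absurd hij.symm hac.ne'
      | exact absurd hij.symm hbc.ne'
      | exact absurd hij.symm had.ne'
      | exact absurd hij.symm hbd.ne'
      | exact absurd hij hab.ne
      | exact absurd hij.symm hab.ne
  refine hK.false ⟨⟨![c, d, a, b], hinj⟩, ?_⟩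
  intro i j
  have key : ∀ x y : Fin 4, K4minus.Adj x y ↔ x ≠ y ∧ ¬(s(x,y) = s(0,1)) := by
    intro x y
    simp [K4minus, SimpleGraph.deleteEdges_adj, SimpleGraph.completeGraph]
  fin_cases i <;> fin_cases j <;>
    simp_all [key, Sym2.eq_iff, hab, hac, hbc, had, hbd, hab.symm, hac.symm, hbc.symm,
      had.symm, hbd.symm, G.irrefl] <;>
    first
      | exact fun h => hn h.symm
      | skip

/-! ### Cliques through triangle edges -/

variable (G) in
/-- The candidate clique through an edge `xy`: endpoints plus common neighbours. -/
noncomputable def cSet (x y : V) : Finset V :=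
  {x, y} ∪ univ.filter (fun z => G.Adj x z ∧ G.Adj y z)

lemma mem_cSet {x y z : V} :
    z ∈ cSet G x y ↔ z = x ∨ z = y ∨ (G.Adj x z ∧ G.Adj y z) := by
  simp [cSet, or_assoc]

lemma cSet_comm (x y : V) : cSet G x y = cSet G y x := by
  ext z; simp [mem_cSet]; tauto

lemma left_mem_cSet {x y : V} : x ∈ cSet G x y := mem_cSet.2 (Or.inl rfl)
lemma right_mem_cSet {x y : V} : y ∈ cSet G x y := mem_cSet.2 (Or.inr (Or.inl rfl))

lemma cSet_clique (hK : IsEmpty (K4minus ↪g G)) {x y : V} (hxy : G.Adj x y) :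
    ∀ u ∈ cSet G x y, ∀ v ∈ cSet G x y, u ≠ v → G.Adj u v := by
  intro u hu v hv huv
  rw [mem_cSet] at hu hv
  rcases hu with rfl | rfl | ⟨hxu, hyu⟩ <;> rcases hv with rfl | rfl | h
  · exact absurd rfl huv
  · exact hxy
  · exact h.1
  · exact hxy.symm
  · exact absurd rfl huv
  · exact h.2
  · exact hxu.symm
  · exact hyu.symm
  · exact diamond hK hxy hxu hyu h.1 h.2 huv

lemma cSet_eq (hK : IsEmpty (K4minus ↪g G)) {x y u v : V} (hxy : G.Adj x y)
    (hu : u ∈ cSet G x y) (hv : v ∈ cSet G x y) (huv : u ≠ v) :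
    cSet G u v = cSet G x y := by
  have hcl := cSet_clique hK hxy
  have huv' : G.Adj u v := hcl u hu v hv huv
  apply Finset.Subset.antisymm
  · intro w hw
    rw [mem_cSet] at hw
    rcases hw with rfl | rfl | ⟨huw, hvw⟩
    · exact hu
    · exact hv
    · have hadj : ∀ t ∈ cSet G x y, t ≠ w → G.Adj w t := by
        intro t ht htw
        by_cases htu : t = u
        · subst htu; exact huw.symm
        by_cases htv : t = v
        · subst htv; exact hvw.symm
        exact (diamond hK huv' (hcl u hu t ht (fun h => htu h.symm))
          (hcl v hv t ht (fun h => htv h.symm)) huw hvw htw).symm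
      by_cases hwx : w = x
      · exact mem_cSet.2 (Or.inl hwx)
      by_cases hwy : w = y
      · exact mem_cSet.2 (Or.inr (Or.inl hwy))
      exact mem_cSet.2 (Or.inr (Or.inr
        ⟨(hadj x left_mem_cSet (fun h => hwx h.symm)).symm,
         (hadj y right_mem_cSet (fun h => hwy h.symm)).symm⟩))
  · intro w hw
    by_cases hwu : w = u
    · exact mem_cSet.2 (Or.inl hwu)
    by_cases hwv : w = v
    · exact mem_cSet.2 (Or.inr (Or.inl hwv))
    exact mem_cSet.2 (Or.inr (Or.inr
      ⟨hcl u hu w hw (fun h => hwu h.symm), hcl v hv w hw (fun h => hwv h.symm)⟩))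

/-! ### Counting within a finset of vertices -/

/-- endpoints of a Sym2 element as a Finset -/
noncomputable def ends : Sym2 V → Finset V :=
  Sym2.lift ⟨fun a b => ({a, b} : Finset V), fun a b => Finset.pair_comm a b⟩

@[simp] lemma ends_mk (a b : V) : ends s(a, b) = {a, b} := rfl

/-- within-edges of a finset -/
noncomputable def EQ (Q : Finset V) : Finset (Sym2 V) :=
  Q.offDiag.image (fun p => s(p.1, p.2))

lemma mem_EQ {Q : Finset V} {e : Sym2 V} :
    e ∈ EQ Q ↔ ∃ a b, a ∈ Q ∧ b ∈ Q ∧ a ≠ b ∧ s(a, b) = e := by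
  simp only [EQ, mem_image, Finset.mem_offDiag, Prod.exists]
  constructor
  · rintro ⟨a, b, ⟨ha, hb, hab⟩, he⟩; exact ⟨a, b, ha, hb, hab, he⟩
  · rintro ⟨a, b, ha, hb, hab, he⟩; exact ⟨a, b, ⟨ha, hb, hab⟩, he⟩

lemma card_EQ (Q : Finset V) : 2 * (EQ Q).card = Q.card * Q.card - Q.card := by
  have hfib : Q.offDiag.card = ∑ e ∈ EQ Q, (Q.offDiag.filter (fun p => s(p.1, p.2) = e)).card :=
    Finset.card_eq_sum_card_fiberwise (fun p hp => mem_image_of_mem _ hp)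
  have hfib2 : ∀ e ∈ EQ Q, (Q.offDiag.filter (fun p => s(p.1, p.2) = e)).card = 2 := by
    intro e he
    obtain ⟨a, b, ha, hb, hab, rfl⟩ := mem_EQ.1 he
    have : Q.offDiag.filter (fun p => s(p.1, p.2) = s(a, b)) = {(a, b), (b, a)} := by
      ext ⟨u, v⟩
      simp only [mem_filter, Finset.mem_offDiag, mem_insert, mem_singleton, Prod.mk.injEq,
        Sym2.eq_iff]
      constructor
      · rintro ⟨-, (⟨rfl, rfl⟩ | ⟨rfl, rfl⟩)⟩
        · exact Or.inl ⟨rfl, rfl⟩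
        · exact Or.inr ⟨rfl, rfl⟩
      · rintro (⟨rfl, rfl⟩ | ⟨rfl, rfl⟩)
        · exact ⟨⟨ha, hb, hab⟩, Or.inl ⟨rfl, rfl⟩⟩
        · exact ⟨⟨hb, ha, hab.symm⟩, Or.inr ⟨rfl, rfl⟩⟩
    rw [this, card_insert_of_notMem (by simp [Prod.ext_iff]; exact fun h => absurd h hab),
      card_singleton]
  rw [Finset.sum_congr rfl hfib2, Finset.sum_const, smul_eq_mul, mul_comm] at hfib
  rw [← hfib, Finset.offDiag_card]

/-- chosen half of a finset -/
noncomputable def halfOf (Q : Finset V) : Finset V :=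
  (Finset.exists_subset_card_eq (Nat.div_le_self Q.card 2)).choose

lemma halfOf_subset (Q : Finset V) : halfOf Q ⊆ Q :=
  (Finset.exists_subset_card_eq (Nat.div_le_self Q.card 2)).choose_spec.1

lemma card_halfOf (Q : Finset V) : (halfOf Q).card = Q.card / 2 :=
  (Finset.exists_subset_card_eq (Nat.div_le_self Q.card 2)).choose_spec.2

/-- crossing edges of the bipartition (halfOf Q, Q \ halfOf Q) -/
noncomputable def crossOf (Q : Finset V) : Finset (Sym2 V) :=
  ((halfOf Q) ×ˢ (Q \ halfOf Q)).image (fun p => s(p.1, p.2))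

lemma mem_crossOf {Q : Finset V} {e : Sym2 V} :
    e ∈ crossOf Q ↔ ∃ a ∈ halfOf Q, ∃ b ∈ Q \ halfOf Q, s(a, b) = e := by
  simp only [crossOf, mem_image, Finset.mem_product, Prod.exists]
  constructor
  · rintro ⟨a, b, ⟨ha, hb⟩, he⟩; exact ⟨a, ha, b, hb, he⟩
  · rintro ⟨a, ha, b, hb, he⟩; exact ⟨a, b, ⟨ha, hb⟩, he⟩

lemma card_crossOf (Q : Finset V) :
    (crossOf Q).card = (Q.card / 2) * (Q.card - Q.card / 2) := by
  rw [crossOf, Finset.card_image_of_injOn, Finset.card_product,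
    card_halfOf, card_sdiff_of_subset (halfOf_subset Q), card_halfOf]
  rintro ⟨a, b⟩ hab ⟨c, d⟩ hcd he
  simp only [Finset.mem_product, Finset.mem_coe, mem_sdiff] at hab hcd
  simp only [Sym2.eq_iff] at he
  rcases he with ⟨rfl, rfl⟩ | ⟨rfl, rfl⟩
  · rfl
  · exact absurd hab.1 hcd.2.2

lemma crossOf_subset_EQ (Q : Finset V) : crossOf Q ⊆ EQ Q := by
  intro e he
  obtain ⟨a, ha, b, hb, he⟩ := mem_crossOf.1 he
  rw [mem_sdiff] at hb
  exact mem_EQ.2 ⟨a, b, halfOf_subset Q ha, hb.1, fun h => hb.2 (h ▸ ha), he⟩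

/-- the ledger arithmetic -/
lemma ledger_arith {q h eqc c m : ℕ} (h3 : 3 ≤ q) (hh : h = q / 2)
    (heq : 2 * eqc = q * q - q) (hc : c = h * (q - h)) (hm : m ≤ h) (hce : c ≤ eqc) :
    m + (eqc - c) ≤ c := by
  have hqle : q ≤ q * q := Nat.le_mul_of_pos_left q (by omega)
  have heq' : 2 * eqc + q = q * q := by omega
  obtain ⟨k, hk | hk⟩ : ∃ k, q = 2 * k ∨ q = 2 * k + 1 := ⟨q / 2, by omega⟩
  · have hh' : h = k := by omega
    have h1 : q - h = k := by omega
    have hc' : c = k * k := by rw [hc, h1, hh']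
    have hqq : q * q = 4 * (k * k) := by rw [hk]; ring
    have key : 2 * m + 2 * eqc ≤ 4 * c := by
      have hm' : m ≤ k := by omega
      omega
    omega
  · have hh' : h = k := by omega
    have h1 : q - h = k + 1 := by omega
    have hc' : c = k * k + k := by rw [hc, h1, hh']; ring
    have hqq : q * q = 4 * (k * k) + 4 * k + 1 := by rw [hk]; ring
    have key : 2 * m + 2 * eqc ≤ 4 * c := by
      have hm' : m ≤ k := by omega
      omega
    omega

/-! ### Triangle edges and the clique decomposition -/

variable (G) in
/-- edges of `G` lying in some triangle -/
noncomputable def TE : Finset (Sym2 V) :=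
  G.edgeFinset.filter (fun e => ∃ z, ∀ x ∈ e, G.Adj x z)

lemma mem_TE {a b : V} :
    s(a,b) ∈ TE G ↔ G.Adj a b ∧ ∃ z, G.Adj a z ∧ G.Adj b z := by
  simp only [TE, mem_filter, SimpleGraph.mem_edgeFinset, SimpleGraph.mem_edgeSet]
  constructor
  · rintro ⟨hab, z, hz⟩
    exact ⟨hab, z, hz a (Sym2.mem_mk_left a b), hz b (Sym2.mem_mk_right a b)⟩
  · rintro ⟨hab, z, hz1, hz2⟩
    refine ⟨hab, z, ?_⟩
    intro x hx
    rcases Sym2.mem_iff.1 hx with rfl | rfl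
    · exact hz1
    · exact hz2

variable (G) in
/-- the clique determined by an edge -/
noncomputable def Qe : Sym2 V → Finset V := Sym2.lift ⟨fun x y => cSet G x y, cSet_comm⟩

@[simp] lemma Qe_mk (a b : V) : Qe G s(a,b) = cSet G a b := rfl

variable (G) in
noncomputable def cliques : Finset (Finset V) := (TE G).image (Qe G)

lemma mem_cliques {Q : Finset V} :
    Q ∈ cliques G ↔ ∃ a b, G.Adj a b ∧ (∃ z, G.Adj a z ∧ G.Adj b z) ∧ Q = cSet G a b := by
  constructor
  · intro hQ
    obtain ⟨e, he, rfl⟩ := mem_image.1 hQ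
    induction e using Sym2.ind with
    | _ a b =>
      obtain ⟨hab, z, hz⟩ := mem_TE.1 he
      exact ⟨a, b, hab, ⟨z, hz⟩, rfl⟩
  · rintro ⟨a, b, hab, hz, rfl⟩
    exact mem_image.2 ⟨s(a,b), mem_TE.2 ⟨hab, hz⟩, rfl⟩

lemma cliques_adj (hK : IsEmpty (K4minus ↪g G)) {Q : Finset V} (hQ : Q ∈ cliques G) :
    ∀ u ∈ Q, ∀ v ∈ Q, u ≠ v → G.Adj u v := by
  obtain ⟨a, b, hab, -, rfl⟩ := mem_cliques.1 hQ
  exact cSet_clique hK hab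

lemma cliques_card {Q : Finset V} (hQ : Q ∈ cliques G) : 3 ≤ Q.card := by
  obtain ⟨a, b, hab, ⟨z, hza, hzb⟩, rfl⟩ := mem_cliques.1 hQ
  have h1 : ({a, b, z} : Finset V) ⊆ cSet G a b := by
    intro w hw
    rcases mem_insert.1 hw with rfl | hw
    · exact left_mem_cSet
    rcases mem_insert.1 hw with rfl | hw
    · exact right_mem_cSet
    rw [mem_singleton] at hw
    subst hw
    exact mem_cSet.2 (Or.inr (Or.inr ⟨hza, hzb⟩))
  have h2 : ({a, b, z} : Finset V).card = 3 := by
    rw [card_insert_of_notMem (by simp [hab.ne, hza.ne]),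
      card_insert_of_notMem (by simp [hzb.ne]), card_singleton]
  calc 3 = ({a, b, z} : Finset V).card := h2.symm
    _ ≤ _ := card_le_card h1

lemma cliques_cSet_eq (hK : IsEmpty (K4minus ↪g G)) {Q : Finset V} {u v : V}
    (hQ : Q ∈ cliques G) (hu : u ∈ Q) (hv : v ∈ Q) (huv : u ≠ v) :
    cSet G u v = Q := by
  obtain ⟨a, b, hab, -, rfl⟩ := mem_cliques.1 hQ
  exact cSet_eq hK hab hu hv huv

lemma cliques_unique (hK : IsEmpty (K4minus ↪g G)) {Q1 Q2 : Finset V} {u v : V}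
    (h1 : Q1 ∈ cliques G) (h2 : Q2 ∈ cliques G)
    (hu1 : u ∈ Q1) (hv1 : v ∈ Q1) (hu2 : u ∈ Q2) (hv2 : v ∈ Q2) (huv : u ≠ v) : Q1 = Q2 :=
  (cliques_cSet_eq hK h1 hu1 hv1 huv).symm.trans (cliques_cSet_eq hK h2 hu2 hv2 huv)

lemma EQ_disjoint (hK : IsEmpty (K4minus ↪g G)) {Q1 Q2 : Finset V}
    (h1 : Q1 ∈ cliques G) (h2 : Q2 ∈ cliques G) (hne : Q1 ≠ Q2) :
    Disjoint (EQ Q1) (EQ Q2) := by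
  rw [Finset.disjoint_left]
  intro e he1 he2
  obtain ⟨a, b, ha, hb, hab, rfl⟩ := mem_EQ.1 he1
  obtain ⟨c, d, hc, hd, hcd, hcd'⟩ := mem_EQ.1 he2
  have hab2 : a ∈ Q2 ∧ b ∈ Q2 := by
    rcases Sym2.eq_iff.1 hcd' with ⟨rfl, rfl⟩ | ⟨rfl, rfl⟩
    · exact ⟨hc, hd⟩
    · exact ⟨hd, hc⟩
  exact hne (cliques_unique hK h1 h2 ha hb hab2.1 hab2.2 hab)

lemma EQ_subset_edgeFinset (hK : IsEmpty (K4minus ↪g G)) {Q : Finset V}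
    (hQ : Q ∈ cliques G) : EQ Q ⊆ G.edgeFinset := by
  intro e he
  obtain ⟨a, b, ha, hb, hab, rfl⟩ := mem_EQ.1 he
  rw [SimpleGraph.mem_edgeFinset, SimpleGraph.mem_edgeSet]
  exact cliques_adj hK hQ a ha b hb hab

lemma EQ_subset_TE (hK : IsEmpty (K4minus ↪g G)) {Q : Finset V}
    (hQ : Q ∈ cliques G) : EQ Q ⊆ TE G := by
  intro e he
  obtain ⟨a, b, ha, hb, hab, rfl⟩ := mem_EQ.1 he
  have h3 := cliques_card hQ
  have hns : ¬ Q ⊆ {a, b} := by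
    intro hsub
    have h4 := card_le_card hsub
    have h5 : ({a, b} : Finset V).card ≤ 2 :=
      (card_insert_le a {b}).trans (by rw [card_singleton])
    omega
  obtain ⟨w, hwQ, hw⟩ := Finset.not_subset.1 hns
  simp only [mem_insert, mem_singleton, not_or] at hw
  exact mem_TE.2 ⟨cliques_adj hK hQ a ha b hb hab, w,
    cliques_adj hK hQ a ha w hwQ (fun h' => hw.1 h'.symm),
    cliques_adj hK hQ b hb w hwQ (fun h' => hw.2 h'.symm)⟩

lemma TE_mem_clique {e : Sym2 V} (he : e ∈ TE G) :
    Qe G e ∈ cliques G ∧ e ∈ EQ (Qe G e) := by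
  induction e using Sym2.ind with
  | _ a b =>
    obtain ⟨hab, hz⟩ := mem_TE.1 he
    exact ⟨mem_cliques.2 ⟨a, b, hab, hz, rfl⟩,
      mem_EQ.2 ⟨a, b, left_mem_cSet, right_mem_cSet, hab.ne, rfl⟩⟩

/-! ### The matching bound -/

lemma matching_bound {A Q : Finset _} (hA : TriIndep G A)
    (hQ : ∀ u ∈ Q, ∀ v ∈ Q, u ≠ v → G.Adj u v) :
    (A ∩ EQ Q).card ≤ Q.card / 2 := by
  have hdisj : ∀ e1 ∈ A ∩ EQ Q, ∀ e2 ∈ A ∩ EQ Q, e1 ≠ e2 → Disjoint (ends e1) (ends e2) := by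
    intro e1 he1 e2 he2 hne
    rw [Finset.disjoint_left]
    intro w hw1 hw2
    obtain ⟨hA1, hE1⟩ := mem_inter.1 he1
    obtain ⟨hA2, hE2⟩ := mem_inter.1 he2
    obtain ⟨a1, b1, ha1, hb1, hab1, he1'⟩ := mem_EQ.1 hE1
    obtain ⟨a2, b2, ha2, hb2, hab2, he2'⟩ := mem_EQ.1 hE2
    subst he1'; subst he2'
    rw [ends_mk, mem_insert, mem_singleton] at hw1 hw2
    have hwQ : w ∈ Q := by rcases hw1 with rfl | rfl; exacts [ha1, hb1]
    obtain ⟨c1, hc1Q, hc1w, hew1⟩ : ∃ c1, c1 ∈ Q ∧ c1 ≠ w ∧ s(w, c1) = s(a1, b1) := by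
      rcases hw1 with rfl | rfl
      · exact ⟨b1, hb1, fun h' => hab1 h'.symm, rfl⟩
      · exact ⟨a1, ha1, hab1, Sym2.eq_swap⟩
    obtain ⟨c2, hc2Q, hc2w, hew2⟩ : ∃ c2, c2 ∈ Q ∧ c2 ≠ w ∧ s(w, c2) = s(a2, b2) := by
      rcases hw2 with rfl | rfl
      · exact ⟨b2, hb2, fun h' => hab2 h'.symm, rfl⟩
      · exact ⟨a2, ha2, hab2, Sym2.eq_swap⟩
    have hc12 : c1 ≠ c2 := by
      rintro rfl
      exact hne (hew1.symm.trans hew2)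
    exact hA.2 c1 w c2 (hQ c1 hc1Q w hwQ hc1w) ((hQ c2 hc2Q w hwQ hc2w).symm)
      (hQ c1 hc1Q c2 hc2Q hc12)
      ⟨by rw [show s(c1,w) = s(w,c1) from Sym2.eq_swap, hew1]; exact hA1,
       by rw [hew2]; exact hA2⟩
  have hsub : (A ∩ EQ Q).biUnion ends ⊆ Q := by
    intro w hw
    obtain ⟨e, he, hwe⟩ := mem_biUnion.1 hw
    obtain ⟨a, b, ha, hb, hab, rfl⟩ := mem_EQ.1 (mem_inter.1 he).2
    rw [ends_mk, mem_insert, mem_singleton] at hwe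
    rcases hwe with rfl | rfl; exacts [ha, hb]
  have h2 : ∑ e ∈ A ∩ EQ Q, (ends e).card = ((A ∩ EQ Q).biUnion ends).card :=
    (Finset.card_biUnion hdisj).symm
  have h3 : ∀ e ∈ A ∩ EQ Q, (ends e).card = 2 := by
    intro e he
    obtain ⟨a, b, ha, hb, hab, rfl⟩ := mem_EQ.1 (mem_inter.1 he).2
    rw [ends_mk, card_insert_of_notMem (by simpa using hab), card_singleton]
  have h4 : 2 * (A ∩ EQ Q).card ≤ Q.card := by
    calc 2 * (A ∩ EQ Q).card = ∑ e ∈ A ∩ EQ Q, (ends e).card := by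
          rw [Finset.sum_congr rfl h3, Finset.sum_const, smul_eq_mul, mul_comm]
      _ = _ := h2
      _ ≤ Q.card := card_le_card hsub
  omega

/-! ### No triangle among crossing edges -/

lemma cross_triangle_false (hK : IsEmpty (K4minus ↪g G)) {x y z : V}
    (hxy : G.Adj x y) (hyz : G.Adj y z) (hxz : G.Adj x z)
    (h1 : ∃ Q ∈ cliques G, s(x,y) ∈ crossOf Q)
    (h2 : ∃ Q ∈ cliques G, s(y,z) ∈ crossOf Q)
    (h3 : ∃ Q ∈ cliques G, s(x,z) ∈ crossOf Q) : False := by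
  obtain ⟨Q1, hQ1, hc1⟩ := h1
  obtain ⟨Q2, hQ2, hc2⟩ := h2
  obtain ⟨Q3, hQ3, hc3⟩ := h3
  have side : ∀ {Q : Finset V} {u v : V}, s(u,v) ∈ crossOf Q →
      (u ∈ halfOf Q ∧ v ∈ Q ∧ v ∉ halfOf Q) ∨ (v ∈ halfOf Q ∧ u ∈ Q ∧ u ∉ halfOf Q) := by
    intro Q u v hc
    obtain ⟨a, ha, b, hb, he⟩ := mem_crossOf.1 hc
    rw [mem_sdiff] at hb
    rcases Sym2.eq_iff.1 he with ⟨rfl, rfl⟩ | ⟨rfl, rfl⟩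
    · exact Or.inl ⟨ha, hb.1, hb.2⟩
    · exact Or.inr ⟨ha, hb.1, hb.2⟩
  have s1 := side hc1
  have s2 := side hc2
  have s3 := side hc3
  have hx1 : x ∈ Q1 := by
    rcases s1 with ⟨h', -, -⟩ | ⟨-, h', -⟩; exacts [halfOf_subset Q1 h', h']
  have hy1 : y ∈ Q1 := by
    rcases s1 with ⟨-, h', -⟩ | ⟨h', -, -⟩; exacts [h', halfOf_subset Q1 h']
  have hy2 : y ∈ Q2 := by
    rcases s2 with ⟨h', -, -⟩ | ⟨-, h', -⟩; exacts [halfOf_subset Q2 h', h']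
  have hz2 : z ∈ Q2 := by
    rcases s2 with ⟨-, h', -⟩ | ⟨h', -, -⟩; exacts [h', halfOf_subset Q2 h']
  have hx3 : x ∈ Q3 := by
    rcases s3 with ⟨h', -, -⟩ | ⟨-, h', -⟩; exacts [halfOf_subset Q3 h', h']
  have hz3 : z ∈ Q3 := by
    rcases s3 with ⟨-, h', -⟩ | ⟨h', -, -⟩; exacts [h', halfOf_subset Q3 h']
  have hQ1xy : cSet G x y = Q1 := cliques_cSet_eq hK hQ1 hx1 hy1 hxy.ne
  have hzQ1 : z ∈ Q1 := by
    rw [← hQ1xy]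
    exact mem_cSet.2 (Or.inr (Or.inr ⟨hxz, hyz⟩))
  have hQ21 : Q2 = Q1 := cliques_unique hK hQ2 hQ1 hy2 hz2 hy1 hzQ1 hyz.ne
  have hQ31 : Q3 = Q1 := cliques_unique hK hQ3 hQ1 hx3 hz3 hx1 hzQ1 hxz.ne
  rw [hQ21] at s2
  rw [hQ31] at s3
  tauto

/-! ### The main construction -/

set_option maxHeartbeats 2000000 in
lemma main (hK : IsEmpty (K4minus ↪g G)) {A : Finset (Sym2 V)} (hA : TriIndep G A) :
    ∃ X : Finset (Sym2 V), (X : Set (Sym2 V)) ⊆ G.edgeSet ∧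
      (G.deleteEdges (X : Set (Sym2 V))).CliqueFree 3 ∧
      (A.card + X.card : ℝ) ≤ (Fintype.card V : ℝ)^2/4 := by
  set X : Finset (Sym2 V) := (cliques G).biUnion (fun Q => EQ Q \ crossOf Q) with hX
  set B : Finset (Sym2 V) := G.edgeFinset \ TE G with hB
  set Ecut : Finset (Sym2 V) := B ∪ (cliques G).biUnion crossOf with hEcut
  have hXsub : (X : Set (Sym2 V)) ⊆ G.edgeSet := by
    intro e he
    rw [Finset.mem_coe, hX] at he
    obtain ⟨Q, hQ, heQ⟩ := mem_biUnion.1 he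
    have h' := EQ_subset_edgeFinset hK hQ (mem_sdiff.1 heQ).1
    rwa [SimpleGraph.mem_edgeFinset] at h'
  have hXfree : (G.deleteEdges (X : Set (Sym2 V))).CliqueFree 3 := by
    intro S hS
    rw [SimpleGraph.is3Clique_iff] at hS
    obtain ⟨x, y, z, hxy, hxz, hyz, rfl⟩ := hS
    rw [SimpleGraph.deleteEdges_adj] at hxy hxz hyz
    obtain ⟨hxy, hxyX⟩ := hxy
    obtain ⟨hxz, hxzX⟩ := hxz
    obtain ⟨hyz, hyzX⟩ := hyz
    have key : ∀ e ∈ TE G, e ∉ (X : Set (Sym2 V)) → ∃ Q ∈ cliques G, e ∈ crossOf Q := by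
      intro e heT heX
      obtain ⟨hQ, heQ⟩ := TE_mem_clique heT
      by_cases hcr : e ∈ crossOf (Qe G e)
      · exact ⟨_, hQ, hcr⟩
      · refine absurd ?_ heX
        rw [hX]
        exact Finset.mem_coe.2 (mem_biUnion.2 ⟨_, hQ, mem_sdiff.2 ⟨heQ, hcr⟩⟩)
    exact cross_triangle_false hK hxy hyz hxz
      (key _ (mem_TE.2 ⟨hxy, z, hxz, hyz⟩) hxyX)
      (key _ (mem_TE.2 ⟨hyz, x, hxy.symm, hxz.symm⟩) hyzX)
      (key _ (mem_TE.2 ⟨hxz, y, hxy, hyz.symm⟩) hxzX)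
  refine ⟨X, hXsub, hXfree, ?_⟩
  -- counting
  have hAsub : A ⊆ (A ∩ B) ∪ (cliques G).biUnion (fun Q => A ∩ EQ Q) := by
    intro e heA
    have heE : e ∈ G.edgeFinset := SimpleGraph.mem_edgeFinset.2 (hA.1 heA)
    by_cases heT : e ∈ TE G
    · obtain ⟨hQ, heQ⟩ := TE_mem_clique heT
      exact mem_union_right _ (mem_biUnion.2 ⟨_, hQ, mem_inter.2 ⟨heA, heQ⟩⟩)
    · exact mem_union_left _ (mem_inter.2 ⟨heA, mem_sdiff.2 ⟨heE, heT⟩⟩)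
  have hAle : A.card ≤ (A ∩ B).card + ∑ Q ∈ cliques G, (A ∩ EQ Q).card := by
    refine (card_le_card hAsub).trans ((card_union_le _ _).trans ?_)
    gcongr
    exact card_biUnion_le
  have hXcard : X.card = ∑ Q ∈ cliques G, (EQ Q \ crossOf Q).card := by
    rw [hX]
    exact card_biUnion (fun Q1 h1 Q2 h2 hne =>
      (EQ_disjoint hK h1 h2 hne).mono sdiff_subset sdiff_subset)
  have hEcutcard : B.card + ∑ Q ∈ cliques G, (crossOf Q).card = Ecut.card := by
    rw [hEcut, card_union_of_disjoint, card_biUnion]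
    · exact fun Q1 h1 Q2 h2 hne =>
        (EQ_disjoint hK h1 h2 hne).mono (crossOf_subset_EQ _) (crossOf_subset_EQ _)
    · rw [Finset.disjoint_left]
      intro e heB heU
      obtain ⟨Q, hQ, hcr⟩ := mem_biUnion.1 heU
      exact (mem_sdiff.1 heB).2 (EQ_subset_TE hK hQ (crossOf_subset_EQ Q hcr))
  have hledger : ∀ Q ∈ cliques G,
      (A ∩ EQ Q).card + (EQ Q \ crossOf Q).card ≤ (crossOf Q).card := by
    intro Q hQ
    rw [card_sdiff_of_subset (crossOf_subset_EQ Q)]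
    exact ledger_arith (cliques_card hQ) rfl
      (by rw [card_EQ]) (card_crossOf Q)
      (matching_bound hA (cliques_adj hK hQ))
      (card_le_card (crossOf_subset_EQ Q))
  have hmain : A.card + X.card ≤ Ecut.card := by
    calc A.card + X.card
        ≤ ((A ∩ B).card + ∑ Q ∈ cliques G, (A ∩ EQ Q).card)
          + ∑ Q ∈ cliques G, (EQ Q \ crossOf Q).card := by
          rw [hXcard]; exact add_le_add_left hAle _
      _ = (A ∩ B).card
          + ∑ Q ∈ cliques G, ((A ∩ EQ Q).card + (EQ Q \ crossOf Q).card) := by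
          rw [Finset.sum_add_distrib]; ring
      _ ≤ B.card + ∑ Q ∈ cliques G, (crossOf Q).card :=
          add_le_add (card_le_card inter_subset_right) (Finset.sum_le_sum hledger)
      _ = Ecut.card := hEcutcard
  have htf : ∀ x y z : V, s(x,y) ∈ Ecut → s(y,z) ∈ Ecut → s(x,z) ∈ Ecut → False := by
    have hadj : ∀ u v : V, s(u,v) ∈ Ecut → G.Adj u v := by
      intro u v huv
      rcases mem_union.1 huv with h' | h'
      · exact (SimpleGraph.mem_edgeSet G).1 (SimpleGraph.mem_edgeFinset.1 (mem_sdiff.1 h').1)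
      · obtain ⟨Q, hQ, hcr⟩ := mem_biUnion.1 h'
        exact (SimpleGraph.mem_edgeSet G).1 (SimpleGraph.mem_edgeFinset.1
          (EQ_subset_edgeFinset hK hQ (crossOf_subset_EQ Q hcr)))
    intro x y z h1 h2 h3
    have hxy := hadj x y h1
    have hyz := hadj y z h2
    have hxz := hadj x z h3
    have hnb : ∀ u v : V, G.Adj u v → (∃ w, G.Adj u w ∧ G.Adj v w) → s(u,v) ∈ Ecut →
        ∃ Q ∈ cliques G, s(u,v) ∈ crossOf Q := by
      intro u v huv hw hmem
      rcases mem_union.1 hmem with hmB | hmU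
      · exact absurd (mem_TE.2 ⟨huv, hw⟩) (mem_sdiff.1 hmB).2
      · obtain ⟨Q, hQ, h'⟩ := mem_biUnion.1 hmU
        exact ⟨Q, hQ, h'⟩
    exact cross_triangle_false hK hxy hyz hxz
      (hnb x y hxy ⟨z, hxz, hyz⟩ h1)
      (hnb y z hyz ⟨x, hxy.symm, hxz.symm⟩ h2)
      (hnb x z hxz ⟨y, hxy, hyz.symm⟩ h3)
  calc (A.card + X.card : ℝ) ≤ ((Ecut.card : ℕ) : ℝ) := by exact_mod_cast hmain
    _ ≤ _ := mantel_finset Ecut htf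

end Stmt14Aux

open Stmt14Aux in
/-- If `G` is an `n`-vertex graph with no induced subgraph isomorphic to `K₄⁻`
(the complete graph on four vertices minus an edge), then `α₁(G) + τ(G) ≤ n²/4`. -/
theorem stmt14 {V : Type*} [Fintype V] (G : SimpleGraph V)
    (h : IsEmpty (K4minus ↪g G)) :
    (alpha1 G + tau G : ℝ) ≤ (Fintype.card V : ℝ) ^ 2 / 4 := by
  classical
  have hS : Set.Nonempty {k | ∃ A : Finset (Sym2 V), TriIndep G A ∧ A.card = k} :=
    ⟨0, ∅, ⟨by simp, fun x y z _ _ _ hc => (Finset.notMem_empty _ hc.1)⟩, rfl⟩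
  have hBdd : BddAbove {k | ∃ A : Finset (Sym2 V), TriIndep G A ∧ A.card = k} := by
    refine ⟨Fintype.card (Sym2 V), ?_⟩
    rintro k ⟨A, -, rfl⟩
    exact (Finset.card_le_univ A).trans_eq (Finset.card_univ)
  have hmem : alpha1 G ∈ {k | ∃ A : Finset (Sym2 V), TriIndep G A ∧ A.card = k} :=
    Nat.sSup_mem hS hBdd
  obtain ⟨A, hA, hAcard⟩ := hmem
  obtain ⟨X, hXsub, hXfree, hXbound⟩ := Stmt14Aux.main h hA
  have htau : tau G ≤ X.card := Nat.sInf_le ⟨X, hXsub, hXfree, rfl⟩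
  have : (alpha1 G + tau G : ℝ) ≤ (A.card + X.card : ℝ) := by
    rw [← hAcard]
    have := (Nat.cast_le (α := ℝ)).2 htau
    linarith
  linarith
end
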